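/- arXiv:1712.10289 — 4 statements merged into one kernel-verified Lean document; each statement's English description precedes it below -/
import Mathlib

section
/- For f ∈ C^n(ℝ), n ≥ 1, the n-th order divided difference satisfies the integral representation f^[n](x₀,…,xₙ) = ∫₀¹ ∂_i f^[n-1](x₀,…,x_{i-2}, t·x_{i-1} + (1-t)·x_i, x_{i+1},…,xₙ) dt for each 1 ≤ i ≤ n. -/
open MeasureTheory

/-- The `n`-th order divided difference of `f`, defined recursively:
`dd f 0 x = f x₀`, and
`dd f (n+1) (x₀,x₁,…) = (dd f n (x₀,x₂,…) - dd f n (x₁,x₂,…))/(x₀ - x₁)` if `x₀ ≠ x₁`,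
and `∂₁ (dd f n) (x₁,x₂,…)` if `x₀ = x₁`. -/
noncomputable def dd (f : ℝ → ℂ) : ℕ → (ℕ → ℝ) → ℂ
  | 0, x => f (x 0)
  | n + 1, x =>
    if x 0 = x 1 then
      deriv (fun s => dd f n (fun i => if i = 0 then s else x (i + 1))) (x 1)
    else
      (dd f n (fun i => if i = 0 then x 0 else x (i + 1)) -
        dd f n (fun i => x (i + 1))) / (((x 0 : ℂ)) - ((x 1 : ℂ)))

theorem dd_succ (f : ℝ → ℂ) (n : ℕ) (x : ℕ → ℝ) :
    dd f (n + 1) x =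
      dslope (fun u => dd f n (fun i => if i = 0 then u else x (i + 1))) (x 1) (x 0) := by
  by_cases h : x 0 = x 1
  · rw [dd, if_pos h, h, dslope_same]
  · rw [dd, if_neg h, dslope_of_ne _ h, slope]
    rw [Complex.real_smul]
    push_cast
    have : (fun i => if i = 0 then x 1 else x (i + 1)) = fun i => x (i + 1) := by
      funext i; rcases i with _ | i <;> simp
    rw [this]
    simp only [vsub_eq_sub]
    field_simp

theorem dd_congr (f : ℝ → ℂ) : ∀ (n : ℕ) (x y : ℕ → ℝ), (∀ i, i ≤ n → x i = y i) →
    dd f n x = dd f n y := by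
  intro n
  induction n with
  | zero => intro x y h; rw [dd, dd, h 0 (le_refl 0)]
  | succ n ih =>
    intro x y h
    rw [dd_succ, dd_succ, h 0 (by omega), h 1 (by omega)]
    congr 1
    funext u
    exact ih _ _ (fun i hi => by
      by_cases hi0 : i = 0 <;> simp [hi0, h (i+1) (by omega)])

theorem lineIntegral_contDiff : ∀ (k : ℕ) (u : ℝ → ℂ), ContDiff ℝ k u → ∀ (j : ℕ) (a : ℝ),
    ContDiff ℝ (k : ℕ) (fun b => ∫ t in (0:ℝ)..1, (t:ℂ)^j * u (a + t * (b - a))) := by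
  intro k
  induction k with
  | zero =>
    intro u hu j a
    rw [show ((0:ℕ):WithTop ℕ∞) = 0 from rfl, contDiff_zero] at *
    exact intervalIntegral.continuous_parametric_intervalIntegral_of_continuous'
      (by fun_prop) 0 1
  | succ k ih =>
    intro u hu j a
    have hu' : Differentiable ℝ u := hu.differentiable (by simp)
    have hud : ContDiff ℝ k (deriv u) := by
      rw [show ((k+1:ℕ):WithTop ℕ∞) = (k:ℕ) + 1 by push_cast; ring, contDiff_succ_iff_deriv] at hu
      exact hu.2.2
    have hcd : Continuous (deriv u) := hud.continuous
    have key : ∀ b₀ : ℝ, HasDerivAt (fun b => ∫ t in (0:ℝ)..1, (t:ℂ)^j * u (a + t * (b - a)))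
        (∫ t in (0:ℝ)..1, (t:ℂ)^(j+1) * deriv u (a + t * (b₀ - a))) b₀ := by
      intro b₀
      set R : ℝ := |a| + |b₀ - a| + 1 with hR
      obtain ⟨C, hC⟩ : ∃ C, ∀ y ∈ Set.Icc (-R) R, ‖deriv u y‖ ≤ C :=
        (isCompact_Icc).exists_bound_of_continuousOn (hud.continuous.continuousOn)
      have := intervalIntegral.hasDerivAt_integral_of_dominated_loc_of_deriv_le
        (F := fun b t => (t:ℂ)^j * u (a + t * (b - a)))
        (F' := fun b t => (t:ℂ)^(j+1) * deriv u (a + t * (b - a)))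
        (μ := volume) (x₀ := b₀) (a := (0:ℝ)) (b := 1) (bound := fun _ => C) (s := Metric.ball b₀ 1) (Metric.ball_mem_nhds b₀ one_pos)
        ?_ ?_ ?_ ?_ ?_ ?_
      · exact this.2
      · filter_upwards with b
        exact (Continuous.aestronglyMeasurable (by fun_prop))
      · exact (Continuous.intervalIntegrable (by fun_prop) _ _)
      · exact (Continuous.aestronglyMeasurable (by fun_prop))
      · filter_upwards with t
        intro ht b hb
        have ht1 : |t| ≤ 1 := by
          rw [Set.uIoc_of_le (by norm_num : (0:ℝ) ≤ 1)] at ht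
          rw [abs_le]; constructor <;> [linarith [ht.1.le]; exact ht.2]
        have harg : a + t * (b - a) ∈ Set.Icc (-R) R := by
          simp only [Metric.mem_ball, Real.dist_eq] at hb
          have h1 : |a + t * (b - a)| ≤ |a| + |t| * |b - a| := by
            calc |a + t * (b - a)| ≤ |a| + |t * (b-a)| := abs_add_le _ _
            _ = |a| + |t| * |b - a| := by rw [abs_mul]
          have h2 : |b - a| ≤ |b₀ - a| + 1 := by
            calc |b - a| = |(b - b₀) + (b₀ - a)| := by ring_nf
            _ ≤ |b - b₀| + |b₀ - a| := abs_add_le _ _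
            _ ≤ 1 + |b₀ - a| := by linarith [hb.le]
            _ = |b₀ - a| + 1 := by ring
          have h3 : |t| * |b - a| ≤ |b - a| := by
            nlinarith [abs_nonneg (b - a)]
          constructor <;> [nlinarith [abs_nonneg (a + t*(b-a)), neg_abs_le (a + t*(b-a))];
            nlinarith [le_abs_self (a + t*(b-a))]]
        calc ‖(t:ℂ)^(j+1) * deriv u (a + t * (b - a))‖
            = |t|^(j+1) * ‖deriv u (a + t * (b - a))‖ := by
              rw [norm_mul, norm_pow, Complex.norm_real, Real.norm_eq_abs]
          _ ≤ 1 * C := by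
              apply mul_le_mul (pow_le_one₀ (abs_nonneg t) ht1) (hC _ harg)
                (norm_nonneg _) zero_le_one
          _ = C := one_mul C
      · exact intervalIntegrable_const
      · filter_upwards with t
        intro ht b hb
        have hg : HasDerivAt (fun b => a + t * (b - a)) t b := by
          simpa using (((hasDerivAt_id b).sub_const a).const_mul t).const_add a
        have := (HasDerivAt.scomp (𝕜 := ℝ) b (hu' _).hasDerivAt hg).const_mul ((t:ℂ)^j)
        refine this.congr_deriv ?_
        simp only [Complex.real_smul]
        ring
    rw [show ((k+1:ℕ):WithTop ℕ∞) = (k:ℕ) + 1 by push_cast; ring, contDiff_succ_iff_deriv]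
    refine ⟨fun b => (key b).differentiableAt, by simp, ?_⟩
    have : deriv (fun b => ∫ t in (0:ℝ)..1, (t:ℂ)^j * u (a + t * (b - a)))
        = fun b => ∫ t in (0:ℝ)..1, (t:ℂ)^(j+1) * deriv u (a + t * (b - a)) := by
      funext b; exact (key b).deriv
    rw [this]
    exact ih (deriv u) hud (j+1) a

theorem dslope_eq_integral {K : ℝ → ℂ} (hd : Differentiable ℝ K) (hc : Continuous (deriv K))
    (a b : ℝ) : dslope K a b = ∫ t in (0:ℝ)..1, deriv K (a + t * (b - a)) := by
  rcases eq_or_ne b a with rfl | h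
  · simp [dslope_same]
  · rw [dslope_of_ne _ h]
    have hF : ∀ t ∈ Set.uIcc (0:ℝ) 1, HasDerivAt (fun t => (b - a)⁻¹ • K (a + t * (b - a)))
        (deriv K (a + t * (b - a))) t := by
      intro t _
      have hg : HasDerivAt (fun t : ℝ => a + t * (b - a)) (b - a) t := by
        simpa using ((hasDerivAt_id t).mul_const (b - a)).const_add a
      have := (HasDerivAt.scomp (𝕜 := ℝ) t (hd _).hasDerivAt hg).const_smul ((b - a)⁻¹)
      refine this.congr_deriv ?_
      rw [smul_smul, inv_mul_cancel₀ (sub_ne_zero.2 h), one_smul]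
    rw [intervalIntegral.integral_eq_sub_of_hasDerivAt hF
      ((hc.comp (by continuity)).intervalIntegrable _ _)]
    simp only [one_mul, zero_mul, add_zero]
    rw [slope, ← smul_sub]
    congr 2
    ring

theorem contDiff_dslope_of_contDiff {K : ℝ → ℂ} {k : ℕ} (hK : ContDiff ℝ ((k:ℕ) + 1) K)
    (a : ℝ) : ContDiff ℝ (k : ℕ) (dslope K a) := by
  have hd : Differentiable ℝ K := hK.differentiable (by simp)
  have hck : ContDiff ℝ (k : ℕ) (deriv K) := (contDiff_succ_iff_deriv.1 hK).2.2
  have hc : Continuous (deriv K) := hck.continuous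
  have heq : dslope K a = fun b => ∫ t in (0:ℝ)..1, (t:ℂ)^0 * deriv K (a + t * (b - a)) := by
    funext b
    simpa using dslope_eq_integral hd hc a b
  rw [heq]
  exact lineIntegral_contDiff k (deriv K) hck 0 a

theorem dd_contDiff : ∀ (n k : ℕ) (f : ℝ → ℂ), ContDiff ℝ ((n+k : ℕ) : ℕ) f → ∀ y : ℕ → ℝ,
    ContDiff ℝ ((k:ℕ) : ℕ) (fun s => dd f n (fun i => if i = 0 then s else y i)) := by
  intro n
  induction n with
  | zero =>
    intro k f hf y
    have : (fun s => dd f 0 (fun i => if i = 0 then s else y i)) = f := by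
      funext s; rw [dd]; simp
    rw [this]
    simpa using hf
  | succ n ih =>
    intro k f hf y
    have heq : (fun s => dd f (n+1) (fun i => if i = 0 then s else y i))
        = dslope (fun u => dd f n (fun i => if i = 0 then u else y (i+1))) (y 1) := by
      funext s
      rw [dd_succ]
      have h0 : (fun u => dd f n (fun i => if i = 0 then u else
          (fun i => if i = 0 then s else y i) (i + 1)))
          = fun u => dd f n (fun i => if i = 0 then u else y (i+1)) := by
        rfl
      rw [h0]
      norm_num
    rw [heq]
    have hf' : ContDiff ℝ ((n + (k+1) : ℕ) : ℕ) f := by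
      rwa [show n + (k+1) = (n+1)+k by omega]
    have := ih (k+1) f hf' (fun i => y (i+1))
    exact contDiff_dslope_of_contDiff (by exact_mod_cast this) (y 1)

theorem deriv_dslope_at {H : ℝ → ℂ} (hd : Differentiable ℝ H) {b c : ℝ} (hbc : b ≠ c) :
    deriv (dslope H c) b =
      (deriv H b * ((b:ℂ) - c) - (H b - H c)) / ((b:ℂ) - c)^2 := by
  have hM : HasDerivAt (fun u : ℝ => ((u:ℂ) - (c:ℂ))) 1 b := by
    simpa using (Complex.ofRealCLM.hasDerivAt (x := b)).sub_const (c:ℂ)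
  have hN : HasDerivAt (fun u : ℝ => H u - H c) (deriv H b) b := (hd b).hasDerivAt.sub_const _
  have hne : ((b:ℂ) - c) ≠ 0 := sub_ne_zero.2 (by exact_mod_cast hbc)
  have hdiv : HasDerivAt (fun u : ℝ => (H u - H c) / ((u:ℂ) - c))
      ((deriv H b * ((b:ℂ) - c) - (H b - H c) * 1) / ((b:ℂ) - c)^2) b := hN.div hM hne
  have hEq : dslope H c =ᶠ[nhds b] fun u : ℝ => (H u - H c) / ((u:ℂ) - c) := by
    filter_upwards [isOpen_ne.mem_nhds hbc] with u hu
    rw [dslope_of_ne _ hu, slope, vsub_eq_sub, Complex.real_smul]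
    push_cast
    ring
  rw [hEq.deriv_eq, hdiv.deriv]
  ring

theorem dslope_dslope_swap_aux {H : ℝ → ℂ} (hd : Differentiable ℝ H) {b c : ℝ} (hbc : b ≠ c) :
    dslope (dslope H c) b b = dslope (dslope H b) c b := by
  rw [dslope_same, dslope_of_ne _ hbc, deriv_dslope_at hd hbc, slope, vsub_eq_sub,
    dslope_same, dslope_of_ne _ hbc.symm, slope, vsub_eq_sub, Complex.real_smul, Complex.real_smul]
  have hne : ((b:ℂ) - c) ≠ 0 := sub_ne_zero.2 (by exact_mod_cast hbc)
  have hne' : ((c:ℂ) - b) ≠ 0 := sub_ne_zero.2 (by exact_mod_cast hbc.symm)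
  push_cast
  field_simp
  ring

theorem dslope_dslope_swap {H : ℝ → ℂ} (hd : Differentiable ℝ H) (a b c : ℝ) :
    dslope (dslope H c) b a = dslope (dslope H b) c a := by
  rcases eq_or_ne b c with rfl | hbc
  · rfl
  rcases eq_or_ne a b with rfl | hab
  · exact dslope_dslope_swap_aux hd hbc
  rcases eq_or_ne a c with rfl | hac
  · exact (dslope_dslope_swap_aux hd hbc.symm).symm
  -- all distinct
  rw [dslope_of_ne _ hab, dslope_of_ne _ hac, slope, slope, vsub_eq_sub, vsub_eq_sub,
    dslope_of_ne _ hac, dslope_of_ne _ (show (b:ℝ) ≠ c from hbc), dslope_of_ne _ hab,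
    dslope_of_ne _ (show (c:ℝ) ≠ b from hbc.symm), slope, slope, slope, slope]
  simp only [vsub_eq_sub, Complex.real_smul]
  have h1 : ((a:ℂ) - b) ≠ 0 := sub_ne_zero.2 (by exact_mod_cast hab)
  have h2 : ((a:ℂ) - c) ≠ 0 := sub_ne_zero.2 (by exact_mod_cast hac)
  have h3 : ((b:ℂ) - c) ≠ 0 := sub_ne_zero.2 (by exact_mod_cast hbc)
  have h4 : ((c:ℂ) - b) ≠ 0 := sub_ne_zero.2 (by exact_mod_cast hbc.symm)
  push_cast
  field_simp
  ring

theorem dslope_comm' (g : ℝ → ℂ) (a b : ℝ) : dslope g a b = dslope g b a := by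
  rcases eq_or_ne a b with rfl | h
  · rfl
  · rw [dslope_of_ne _ h.symm, dslope_of_ne _ h, slope_comm]

def swapSeq (k : ℕ) (x : ℕ → ℝ) : ℕ → ℝ :=
  fun i => if i = k then x (k+1) else if i = k+1 then x k else x i

def rotSeq (j : ℕ) (x : ℕ → ℝ) : ℕ → ℝ :=
  fun m => if m = 0 then x j else if m ≤ j then x (m-1) else x m

theorem rotSeq_zero (x : ℕ → ℝ) : rotSeq 0 x = x := by
  funext m
  simp only [rotSeq]
  split_ifs <;> first | rfl | contradiction | (congr 1; omega) | omega

theorem rotSeq_succ (j : ℕ) (x : ℕ → ℝ) : rotSeq (j+1) x = rotSeq j (swapSeq j x) := by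
  funext m
  simp only [rotSeq, swapSeq]
  split_ifs <;> first | rfl | contradiction | (congr 1; omega) | omega

theorem dd_expand2 (f : ℝ → ℂ) (m : ℕ) (z : ℕ → ℝ) :
    dd f (m+2) z = dslope (dslope
      (fun v => dd f m (fun i => if i = 0 then v else z (i+2))) (z 2)) (z 1) (z 0) := by
  rw [dd_succ]
  congr 1
  funext u
  rw [dd_succ]
  rfl

theorem dd_swap : ∀ (k n : ℕ) (f : ℝ → ℂ) (x : ℕ → ℝ), ContDiff ℝ (n:ℕ) f → k + 1 ≤ n →
    dd f n (swapSeq k x) = dd f n x := by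
  intro k
  induction k using Nat.strong_induction_on with
  | _ k IH =>
    match k with
    | 0 =>
      intro n f x _ hn
      obtain ⟨m, rfl⟩ : ∃ m, n = m + 1 := ⟨n - 1, by omega⟩
      rw [dd_succ, dd_succ]
      have h0 : swapSeq 0 x 0 = x 1 := by simp [swapSeq]
      have h1 : swapSeq 0 x 1 = x 0 := by simp [swapSeq]
      have hinner : (fun u => dd f m (fun i => if i = 0 then u else swapSeq 0 x (i+1)))
          = fun u => dd f m (fun i => if i = 0 then u else x (i+1)) := by
        funext u
        congr 1
        funext i
        rcases i with _ | i
        · rfl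
        · simp [swapSeq]
      rw [hinner, h0, h1, dslope_comm']
    | 1 =>
      intro n f x hf hn
      obtain ⟨m, rfl⟩ : ∃ m, n = m + 2 := ⟨n - 2, by omega⟩
      rw [dd_expand2, dd_expand2]
      have h0 : swapSeq 1 x 0 = x 0 := by simp [swapSeq]
      have h1 : swapSeq 1 x 1 = x 2 := by simp [swapSeq]
      have h2 : swapSeq 1 x 2 = x 1 := by simp [swapSeq]
      have hinner : (fun v => dd f m (fun i => if i = 0 then v else swapSeq 1 x (i+2)))
          = fun v => dd f m (fun i => if i = 0 then v else x (i+2)) := by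
        funext v
        congr 1
        funext i
        rcases i with _ | i
        · rfl
        · simp [swapSeq]
      rw [hinner, h0, h1, h2]
      have hH : Differentiable ℝ (fun v => dd f m (fun i => if i = 0 then v else x (i+2))) := by
        have := dd_contDiff m 2 f (by exact_mod_cast hf) (fun i => x (i+2))
        exact this.differentiable (by simp)
      exact dslope_dslope_swap hH (x 0) (x 2) (x 1)
    | (k+2) =>
      intro n f x hf hn
      obtain ⟨m, rfl⟩ : ∃ m, n = m + 1 := ⟨n - 1, by omega⟩
      rw [dd_succ, dd_succ]
      have h0 : swapSeq (k+2) x 0 = x 0 := by simp [swapSeq]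
      have h1 : swapSeq (k+2) x 1 = x 1 := by simp [swapSeq]
      rw [h0, h1]
      congr 1
      funext u
      have hseq : (fun i => if i = 0 then u else swapSeq (k+2) x (i+1))
          = swapSeq (k+1) (fun i => if i = 0 then u else x (i+1)) := by
        funext i
        simp only [swapSeq]
        rcases i with _ | i
        · norm_num
        · split_ifs <;> first | rfl | contradiction | (congr 1; omega) | omega
      rw [hseq]
      exact IH (k+1) (by omega) m f _ (hf.of_le (by exact_mod_cast Nat.le_succ m)) (by omega)

theorem dd_rot : ∀ (j n : ℕ) (f : ℝ → ℂ) (x : ℕ → ℝ), ContDiff ℝ (n:ℕ) f → j ≤ n →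
    dd f n (rotSeq j x) = dd f n x := by
  intro j
  induction j with
  | zero => intro n f x _ _; rw [rotSeq_zero]
  | succ j ih =>
    intro n f x hf hj
    rw [rotSeq_succ, ih n f _ hf (by omega), dd_swap j n f x hf (by omega)]

/-- For `f ∈ Cⁿ(ℝ)`, `n ≥ 1`, and `1 ≤ i ≤ n`, the integral representation
`f^[n](x₀,…,xₙ) = ∫₀¹ ∂ᵢ f^[n-1](x₀,…,x_{i-2}, t·x_{i-1} + (1-t)·x_i, x_{i+1},…,xₙ) dt`. -/
theorem dividedDifference_integral_rep (f : ℝ → ℂ) (n : ℕ) (hn : 1 ≤ n)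
    (hf : ContDiff ℝ n f) (i : ℕ) (hi1 : 1 ≤ i) (hin : i ≤ n) (x : ℕ → ℝ) :
    dd f n x =
      ∫ t in (0:ℝ)..1,
        deriv (fun s => dd f (n - 1)
            (fun j => if j + 1 < i then x j else if j + 1 = i then s else x (j + 1)))
          (t * x (i - 1) + (1 - t) * x i) := by
  obtain ⟨m, rfl⟩ : ∃ m, n = m + 1 := ⟨n - 1, by omega⟩
  simp only [Nat.add_sub_cancel]
  set g : ℝ → ℂ := fun s => dd f m
      (fun j => if j + 1 < i then x j else if j + 1 = i then s else x (j + 1)) with hg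
  set y : ℕ → ℝ := rotSeq i (rotSeq i x) with hy
  have hfm : ContDiff ℝ (m:ℕ) f := hf.of_le (by exact_mod_cast Nat.le_succ m)
  have hstep1 : dd f (m+1) x = dd f (m+1) y := by
    rw [hy, dd_rot i (m+1) f _ hf hin, dd_rot i (m+1) f x hf hin]
  have hy0 : y 0 = x (i-1) := by
    simp only [hy, rotSeq]
    split_ifs <;> first | rfl | contradiction | (congr 1; omega) | omega
  have hy1 : y 1 = x i := by
    simp only [hy, rotSeq]
    split_ifs <;> first | rfl | contradiction | (congr 1; omega) | omega
  have hGg : (fun u => dd f m (fun j => if j = 0 then u else y (j+1))) = g := by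
    funext s
    rw [hg]
    have hrot : rotSeq (i-1) (fun j => if j + 1 < i then x j else if j + 1 = i then s
        else x (j + 1)) = fun j => if j = 0 then s else y (j+1) := by
      funext j
      simp only [rotSeq, hy]
      split_ifs <;> first | rfl | contradiction | (congr 1; omega) | omega
    have hdr := dd_rot (i-1) m f
      (fun j => if j + 1 < i then x j else if j + 1 = i then s else x (j + 1)) hfm (by omega)
    rw [hrot] at hdr
    exact hdr
  have hsm : ContDiff ℝ (1:ℕ) g := by
    rw [← hGg]
    exact_mod_cast dd_contDiff m 1 f (by exact_mod_cast hf) (fun j => y (j+1))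
  have hgd : Differentiable ℝ g := hsm.differentiable (by simp)
  have hgc : Continuous (deriv g) := (contDiff_one_iff_deriv.1 (by exact_mod_cast hsm)).2
  have hmain : dd f (m+1) x = dslope g (x i) (x (i-1)) := by
    rw [hstep1, dd_succ, hy0, hy1, hGg]
  rw [hmain, dslope_eq_integral hgd hgc]
  apply intervalIntegral.integral_congr
  intro t _
  congr 1
  ring
end

section
/- For m ≥ 1 and α ∈ ℂ \ ℝ, the second divided difference of f_m(x) = (x-α)^{-m} satisfies f_m^[2](x₀,x₁,x₂) = -∑_{k=1}^{m} f_k^[1](x₀,x₁) · f_{m-k+1}(x₂) for all x₀,x₁,x₂ ∈ ℝ; in particular f_m^[2] lies in the algebraic tensor product C_b(ℝ) ⊗ C_b(ℝ) ⊗ C_b(ℝ). -/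
/-- `f_{m,α}(x) = 1/(x-α)^m`. -/
noncomputable def fma (α : ℂ) (m : ℕ) (x : ℝ) : ℂ := 1 / ((x : ℂ) - α) ^ m

open Finset

lemma Icc_to_range {M : Type*} [AddCommMonoid M] (m : ℕ) (F : ℕ → ℕ → M) :
    ∑ k ∈ Finset.Icc 1 m, F k (m - k + 1) = ∑ i ∈ Finset.range m, F (i + 1) (m - i) := by
  refine Finset.sum_nbij' (fun k => k - 1) (fun i => i + 1) ?_ ?_ ?_ ?_ ?_ <;>
    simp only [Finset.mem_Icc, Finset.mem_range] <;> intros <;> first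
  | omega
  | (congr 1 <;> omega)

lemma key_alg (a b : ℂ) (ha : a ≠ 0) (hb : b ≠ 0) (m : ℕ) :
    1/a^m - 1/b^m = -(a-b) * ∑ i ∈ Finset.range m, 1/a^(i+1) * 1/b^(m-i) := by
  rcases eq_or_ne a b with rfl | hab
  · simp
  have hS : ∑ i ∈ Finset.range m, 1/a^(i+1) * 1/b^(m-i)
      = (∑ i ∈ Finset.range m, b^i * a^(m-1-i)) / (a^m * b^m) := by
    rw [Finset.sum_div]
    refine Finset.sum_congr rfl fun i hi => ?_
    rw [Finset.mem_range] at hi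
    have h1 : (1:ℂ)/a^(i+1) = a^(m-1-i)/a^m := by
      rw [div_eq_div_iff (pow_ne_zero _ ha) (pow_ne_zero _ ha), one_mul, ← pow_add]
      congr 1; omega
    have h2 : (1:ℂ)/b^(m-i) = b^i/b^m := by
      rw [div_eq_div_iff (pow_ne_zero _ hb) (pow_ne_zero _ hb), one_mul, ← pow_add]
      congr 1; omega
    have hre : (1:ℂ)/a^(i+1) * 1/b^(m-i) = (1/a^(i+1)) * (1/b^(m-i)) := by ring
    rw [hre, h1, h2, div_mul_div_comm, mul_comm (a^(m-1-i)) (b^i)]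
  rw [hS, div_sub_div _ _ (pow_ne_zero m ha) (pow_ne_zero m hb), one_mul, mul_one,
    neg_sub, mul_div_assoc']
  congr 1
  rw [mul_comm]
  exact (geom_sum₂_mul b a m).symm

lemma sub_alpha_ne (α : ℂ) (hα : α.im ≠ 0) (x : ℝ) : (x:ℂ) - α ≠ 0 := by
  intro h
  rw [sub_eq_zero] at h
  exact hα (by rw [← h]; simp)

lemma hasDerivAt_fma (α : ℂ) (hα : α.im ≠ 0) (n : ℕ) (x : ℝ) :
    HasDerivAt (fma α n) (-(n:ℂ) * fma α (n+1) x) x := by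
  have h0 : ((x:ℂ) - α) ≠ 0 := sub_alpha_ne α hα x
  have h1 : HasDerivAt (fun z : ℂ => z - α) 1 (x : ℂ) := (hasDerivAt_id _).sub_const α
  have h2 : HasDerivAt (fun z : ℂ => z ^ (-(n:ℤ))) ((↑(-(n:ℤ)) : ℂ) * ((x:ℂ) - α) ^ (-(n:ℤ) - 1))
      ((x:ℂ) - α) := hasDerivAt_zpow _ _ (Or.inl h0)
  have h3 := (h2.comp (x:ℂ) h1)
  rw [mul_one] at h3
  have h4 := h3.comp_ofReal
  have he : (fun y : ℝ => ((fun z : ℂ => z ^ (-(n:ℤ))) ∘ fun z : ℂ => z - α) (y : ℂ)) = fma α n := by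
    funext y
    simp [fma, Function.comp, zpow_neg, zpow_natCast, one_div]
  rw [he] at h4
  convert h4 using 1
  have : (-(n:ℤ) - 1) = -((n+1 : ℕ) : ℤ) := by push_cast; ring
  rw [this, zpow_neg, zpow_natCast, fma, one_div]
  push_cast
  ring

lemma fma_mul (α : ℂ) (a b : ℕ) (x : ℝ) : fma α a x * fma α b x = fma α (a+b) x := by
  simp [fma, pow_add, div_mul_div_comm, mul_comm]

lemma fma_sum_diag (α : ℂ) (k : ℕ) (x : ℝ) :
    ∑ i ∈ Finset.range k, fma α (i+1) x * fma α (k-i) x = (k:ℂ) * fma α (k+1) x := by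
  have h : ∀ i ∈ Finset.range k, fma α (i+1) x * fma α (k-i) x = fma α (k+1) x := by
    intro i hi
    rw [Finset.mem_range] at hi
    rw [fma_mul]
    congr 1
    omega
  rw [Finset.sum_congr rfl h, Finset.sum_const, card_range, nsmul_eq_mul]

lemma dd_one (α : ℂ) (hα : α.im ≠ 0) (m : ℕ) (g : ℕ → ℝ) :
    dd (fma α m) 1 g = -∑ i ∈ Finset.range m, fma α (i+1) (g 0) * fma α (m-i) (g 1) := by
  rw [dd]
  split_ifs with h
  · have hd : deriv (fun s => dd (fma α m) 0 fun i => if i = 0 then s else g (i + 1)) (g 1)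
        = -(m:ℂ) * fma α (m+1) (g 1) := by
      simp only [dd, if_pos rfl]
      exact (hasDerivAt_fma α hα m (g 1)).deriv
    rw [hd, h, fma_sum_diag]
    ring
  · simp only [dd]
    have hk := key_alg ((g 0 : ℂ) - α) ((g 1 : ℂ) - α) (sub_alpha_ne α hα _) (sub_alpha_ne α hα _) m
    have hd : ((g 0 : ℂ) - α) - ((g 1 : ℂ) - α) = (g 0 : ℂ) - (g 1 : ℂ) := by ring
    rw [hd] at hk
    have hne : ((g 0 : ℂ) - (g 1 : ℂ)) ≠ 0 := by
      rw [sub_ne_zero]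
      exact_mod_cast h
    show (fma α m (g 0) - fma α m (g 1)) / _ = _
    rw [show fma α m (g 0) - fma α m (g 1)
        = 1/((g 0 : ℂ) - α)^m - 1/((g 1 : ℂ) - α)^m from rfl, hk, neg_mul, neg_div,
      mul_div_cancel_left₀ _ hne]
    simp only [fma]
    congr 1
    exact Finset.sum_congr rfl fun i _ => by ring

lemma dd_one_ne (f : ℝ → ℂ) (g : ℕ → ℝ) (h : g 0 ≠ g 1) :
    dd f 1 g = (f (g 0) - f (g 1)) / ((g 0 : ℂ) - (g 1 : ℂ)) := by
  rw [dd, if_neg h]; simp [dd]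

lemma dd_two (α : ℂ) (hα : α.im ≠ 0) (m : ℕ) (g : ℕ → ℝ) :
    dd (fma α m) 2 g = -∑ k ∈ Finset.Icc 1 m,
      dd (fma α k) 1 (fun j => if j = 0 then g 0 else g 1) * fma α (m - k + 1) (g 2) := by
  rw [show (2:ℕ) = 1 + 1 from rfl, dd]
  split_ifs with h
  · have hfun : (fun s => dd (fma α m) 1 fun i => if i = 0 then s else g (i + 1))
        = fun s => -∑ i ∈ Finset.range m, fma α (i+1) s * fma α (m-i) (g 2) := by
      funext s
      rw [dd_one α hα]
      norm_num
    rw [hfun]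
    have hder : HasDerivAt (fun s => -∑ i ∈ Finset.range m, fma α (i+1) s * fma α (m-i) (g 2))
        (-∑ i ∈ Finset.range m,
          -((i:ℂ)+1) * fma α (i+1+1) (g 1) * fma α (m-i) (g 2)) (g 1) := by
      apply HasDerivAt.neg
      apply HasDerivAt.fun_sum
      intro i _
      have := (hasDerivAt_fma α hα (i+1) (g 1)).mul_const (fma α (m-i) (g 2))
      convert this using 2
      · rfl
      push_cast
      ring
    rw [hder.deriv]
    have hterm : ∀ k, dd (fma α k) 1 (fun j => if j = 0 then g 0 else g 1)
        = -(k:ℂ) * fma α (k+1) (g 1) := by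
      intro k
      rw [dd_one α hα]
      show -∑ i ∈ Finset.range k, fma α (i+1) (g 0) * fma α (k-i) (g 1) = _
      rw [h, fma_sum_diag, neg_mul]
    simp only [hterm]
    rw [Icc_to_range m (fun k e => -(k:ℂ) * fma α (k+1) (g 1) * fma α e (g 2))]
    congr 1
    refine Finset.sum_congr rfl fun i _ => ?_
    push_cast
    ring
  · have hne : ((g 0 : ℂ) - (g 1 : ℂ)) ≠ 0 := by
      rw [sub_ne_zero]; exact_mod_cast h
    rw [dd_one α hα m, dd_one α hα m]
    norm_num
    have hterm : ∀ k, dd (fma α k) 1 (fun j => if j = 0 then g 0 else g 1)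
        = (fma α k (g 0) - fma α k (g 1)) / ((g 0 : ℂ) - (g 1 : ℂ)) :=
      fun k => dd_one_ne (fma α k) _ h
    simp only [hterm]
    rw [Icc_to_range m (fun k e =>
      (fma α k (g 0) - fma α k (g 1)) / ((g 0 : ℂ) - (g 1 : ℂ)) * fma α e (g 2))]
    simp only [div_mul_eq_mul_div]
    rw [← Finset.sum_div, ← neg_div]
    congr 1
    simp only [sub_mul, Finset.sum_sub_distrib]
    ring

lemma fma_cont (α : ℂ) (hα : α.im ≠ 0) (n : ℕ) : Continuous (fma α n) := by
  apply Continuous.div continuous_const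
    ((Complex.continuous_ofReal.sub continuous_const).pow n)
  exact fun x => pow_ne_zero n (sub_alpha_ne α hα x)

lemma fma_bdd (α : ℂ) (hα : α.im ≠ 0) (n : ℕ) (x : ℝ) :
    ‖fma α n x‖ ≤ (|α.im|⁻¹) ^ n := by
  have him : |α.im| ≤ ‖(x:ℂ) - α‖ := by
    have := Complex.abs_im_le_norm ((x:ℂ) - α)
    simpa using this
  have hpos : 0 < |α.im| := abs_pos.mpr hα
  rw [fma, norm_div, norm_one, norm_pow, one_div, ← inv_pow]
  have : ‖(x:ℂ) - α‖⁻¹ ≤ |α.im|⁻¹ := inv_anti₀ hpos him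
  gcongr

lemma sum_repr (α : ℂ) (m : ℕ) (s t u : ℝ) :
    (-∑ k ∈ Finset.Icc 1 m,
        (-∑ i ∈ Finset.range k, fma α (i+1) s * fma α (k-i) t) * fma α (m-k+1) u)
      = ∑ j : Fin (m*m),
          (if ((finProdFinEquiv.symm j).2 : ℕ) ≤ ((finProdFinEquiv.symm j).1 : ℕ)
            then fma α (((finProdFinEquiv.symm j).2 : ℕ) + 1) s else 0) *
          fma α (((finProdFinEquiv.symm j).1 : ℕ) - ((finProdFinEquiv.symm j).2 : ℕ) + 1) t *
          fma α (m - ((finProdFinEquiv.symm j).1 : ℕ)) u := by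
  have hL : (-∑ k ∈ Finset.Icc 1 m,
        (-∑ i ∈ Finset.range k, fma α (i+1) s * fma α (k-i) t) * fma α (m-k+1) u)
      = ∑ a ∈ Finset.range m, ∑ b ∈ Finset.range (a+1),
          fma α (b+1) s * fma α (a-b+1) t * fma α (m-a) u := by
    rw [Icc_to_range m (fun k e =>
      (-∑ i ∈ Finset.range k, fma α (i+1) s * fma α (k-i) t) * fma α e u)]
    simp only [neg_mul, Finset.sum_neg_distrib, neg_neg, Finset.sum_mul]
    refine Finset.sum_congr rfl fun a ha => Finset.sum_congr rfl fun b hb => ?_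
    rw [Finset.mem_range] at ha hb
    have hb' : a + 1 - b = a - b + 1 := by omega
    rw [hb']
  rw [hL, ← Equiv.sum_comp (finProdFinEquiv : Fin m × Fin m ≃ Fin (m*m))]
  simp only [Equiv.symm_apply_apply]
  rw [Fintype.sum_prod_type]
  have hinner : ∀ a : ℕ, a < m →
      (∑ b : Fin m, (if (b:ℕ) ≤ a then fma α ((b:ℕ)+1) s else 0) *
          fma α (a-(b:ℕ)+1) t * fma α (m-a) u)
        = ∑ b ∈ Finset.range (a+1), fma α (b+1) s * fma α (a-b+1) t * fma α (m-a) u := by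
    intro a ha
    rw [Fin.sum_univ_eq_sum_range (fun b =>
      (if b ≤ a then fma α (b+1) s else 0) * fma α (a-b+1) t * fma α (m-a) u) m]
    simp only [ite_mul, zero_mul]
    rw [← Finset.sum_filter]
    congr 1
    ext b
    simp only [Finset.mem_filter, Finset.mem_range]
    omega
  rw [show (∑ a : Fin m, ∑ b : Fin m,
      (if ((a,b).2:ℕ) ≤ ((a,b).1:ℕ) then fma α (((a,b).2:ℕ)+1) s else 0) *
        fma α (((a,b).1:ℕ)-((a,b).2:ℕ)+1) t * fma α (m-((a,b).1:ℕ)) u)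
      = ∑ a : Fin m, ∑ b ∈ Finset.range ((a:ℕ)+1),
          fma α (b+1) s * fma α ((a:ℕ)-b+1) t * fma α (m-(a:ℕ)) u from
    Finset.sum_congr rfl fun a _ => hinner (a:ℕ) a.isLt]
  exact (Fin.sum_univ_eq_sum_range (fun a => ∑ b ∈ Finset.range (a+1),
    fma α (b+1) s * fma α (a-b+1) t * fma α (m-a) u) m).symm

/-- For `m ≥ 1` and `α ∈ ℂ \ ℝ`, the second divided difference of
`f_m(x) = (x-α)^{-m}` satisfies
`f_m^[2](x₀,x₁,x₂) = - ∑_{k=1}^m f_k^[1](x₀,x₁) · f_{m-k+1}(x₂)`;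
in particular `f_m^[2]` lies in the algebraic tensor product
`C_b(ℝ) ⊗ C_b(ℝ) ⊗ C_b(ℝ)`, i.e. it is a finite sum of products of bounded
continuous functions of the separate variables. -/
theorem fma_secondDividedDifference (α : ℂ) (hα : α.im ≠ 0) (m : ℕ) (hm : 1 ≤ m) :
    (∀ x₀ x₁ x₂ : ℝ,
      dd (fma α m) 2 (fun j => if j = 0 then x₀ else if j = 1 then x₁ else x₂) =
        -∑ k ∈ Finset.Icc 1 m,
          (dd (fma α k) 1 (fun j => if j = 0 then x₀ else x₁)) *
            fma α (m - k + 1) x₂) ∧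
    ∃ (N : ℕ) (p q r : Fin N → ℝ → ℂ),
      (∀ j, Continuous (p j) ∧ ∃ C : ℝ, ∀ x, ‖p j x‖ ≤ C) ∧
      (∀ j, Continuous (q j) ∧ ∃ C : ℝ, ∀ x, ‖q j x‖ ≤ C) ∧
      (∀ j, Continuous (r j) ∧ ∃ C : ℝ, ∀ x, ‖r j x‖ ≤ C) ∧
      ∀ s t u : ℝ,
        dd (fma α m) 2 (fun j => if j = 0 then s else if j = 1 then t else u) =
          ∑ j, p j s * q j t * r j u := by
  constructor
  · intro x₀ x₁ x₂
    exact dd_two α hα m (fun j => if j = 0 then x₀ else if j = 1 then x₁ else x₂)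
  · refine ⟨m*m,
      (fun j => if ((finProdFinEquiv.symm j).2 : ℕ) ≤ ((finProdFinEquiv.symm j).1 : ℕ)
        then fma α (((finProdFinEquiv.symm j).2 : ℕ) + 1) else 0),
      (fun j => fma α (((finProdFinEquiv.symm j).1 : ℕ) - ((finProdFinEquiv.symm j).2 : ℕ) + 1)),
      (fun j => fma α (m - ((finProdFinEquiv.symm j).1 : ℕ))), ?_, ?_, ?_, ?_⟩
    · intro j
      dsimp only
      split_ifs with hc
      · exact ⟨fma_cont α hα _, _, fun x => fma_bdd α hα _ x⟩
      · exact ⟨continuous_const, 0, fun x => by simp⟩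
    · exact fun j => ⟨fma_cont α hα _, _, fun x => fma_bdd α hα _ x⟩
    · exact fun j => ⟨fma_cont α hα _, _, fun x => fma_bdd α hα _ x⟩
    · intro s t u
      have h2 := dd_two α hα m (fun j => if j = 0 then s else if j = 1 then t else u)
      norm_num at h2
      have hterm : ∀ k, dd (fma α k) 1 (fun j => if j = 0 then s else t)
          = -∑ i ∈ Finset.range k, fma α (i+1) s * fma α (k-i) t := by
        intro k
        rw [dd_one α hα]
        norm_num
      rw [h2]
      have hmid : (-∑ k ∈ Finset.Icc 1 m,
          dd (fma α k) 1 (fun j => if j = 0 then s else t) * fma α (m-k+1) u)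
          = (-∑ k ∈ Finset.Icc 1 m,
          (-∑ i ∈ Finset.range k, fma α (i+1) s * fma α (k-i) t) * fma α (m-k+1) u) := by
        simp only [hterm]
      rw [hmid, sum_repr α m s t u]
      refine Finset.sum_congr rfl fun j _ => ?_
      simp only [apply_ite (fun f : ℝ → ℂ => f s), Pi.zero_apply]
end

section
/- Let f ∈ B²_{∞1}(ℝ) admit the representation f^[2](s,t,u) = ∫_Ω α(s,w)β(t,w)γ(u,w) dσ(w) with α, β, γ bounded measurable on ℝ×Ω, continuous in the first variable, and ∫_Ω ‖α(·,w)‖_∞‖β(·,w)‖_∞‖γ(·,w)‖_∞ dσ(w) < ∞, where L²(Ω,σ) is separable. Then there exist bounded continuous functions a : ℝ → L²(Ω,σ) and b : ℝ² → L²(Ω,σ) with f^[2](s,t,u) = ⟨a(s), b(t,u)⟩ for all (s,t,u) ∈ ℝ³. -/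
open MeasureTheory

section Helpers
open Filter Topology ENNReal

lemma ciSup_eq_ciSup_rat {h : ℝ → ℝ} (hc : Continuous h) {C : ℝ} (hC : ∀ s, h s ≤ C) :
    ⨆ s, h s = ⨆ q : ℚ, h (q : ℝ) := by
  have bddR : BddAbove (Set.range h) := ⟨C, by rintro x ⟨s, rfl⟩; exact hC s⟩
  have bddQ : BddAbove (Set.range fun q : ℚ => h (q : ℝ)) :=
    ⟨C, by rintro x ⟨q, rfl⟩; exact hC q⟩
  refine le_antisymm (ciSup_le fun s => ?_) (ciSup_le fun q => le_ciSup bddR (q : ℝ))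
  have hs : s ∈ closure (Set.range ((↑) : ℚ → ℝ)) := by
    rw [Rat.denseRange_cast.closure_eq]; trivial
  obtain ⟨u, hu_mem, hu_tendsto⟩ := mem_closure_iff_seq_limit.mp hs
  refine le_of_tendsto ((hc.tendsto s).comp hu_tendsto)
    (Eventually.of_forall fun n => ?_)
  obtain ⟨q, hq⟩ := hu_mem n
  show h (u n) ≤ _; rw [← hq]
  exact le_ciSup bddQ q

lemma continuous_toLp_of_dominated {X : Type*} [TopologicalSpace X]
    [FirstCountableTopology X]
    {Ω : Type*} [MeasurableSpace Ω] {σ : Measure Ω}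
    {F : X → Ω → ℂ} (hFm : ∀ x, Measurable (F x))
    (hFc : ∀ w, Continuous fun x => F x w)
    {D : Ω → ℝ} (hD : ∀ x w, ‖F x w‖ ≤ D w)
    (hDi : Integrable (fun w => D w ^ 2) σ)
    (hmem : ∀ x, MemLp (F x) 2 σ) :
    Continuous fun x => (hmem x).toLp (F x) := by
  rw [continuous_iff_continuousAt]
  intro x₀
  have : ContinuousAt (fun x => (hmem x).toLp (F x)) x₀ ↔
      Tendsto (fun x => eLpNorm (F x - F x₀) 2 σ) (𝓝 x₀) (𝓝 0) :=
    Lp.tendsto_Lp_iff_tendsto_eLpNorm'' _ hmem _ (hmem x₀)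
  rw [this]
  have key : Tendsto (fun x => ∫⁻ w, ENNReal.ofReal (‖F x w - F x₀ w‖ ^ 2) ∂σ)
      (𝓝 x₀) (𝓝 0) := by
    have h0 : (0 : ℝ≥0∞) = ∫⁻ (_ : Ω), (0 : ℝ≥0∞) ∂σ := by simp
    rw [h0]
    refine tendsto_lintegral_filter_of_dominated_convergence
      (fun w => ENNReal.ofReal ((2 * D w) ^ 2)) ?_ ?_ ?_ ?_
    · exact Eventually.of_forall fun x =>
        (((hFm x).sub (hFm x₀)).norm.pow_const 2).ennreal_ofReal
    · refine Eventually.of_forall fun x => ae_of_all _ fun w => ?_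
      refine ENNReal.ofReal_le_ofReal ?_
      have h1 : ‖F x w - F x₀ w‖ ≤ 2 * D w := by
        calc ‖F x w - F x₀ w‖ ≤ ‖F x w‖ + ‖F x₀ w‖ := norm_sub_le _ _
          _ ≤ D w + D w := add_le_add (hD x w) (hD x₀ w)
          _ = 2 * D w := by ring
      have h2 : 0 ≤ ‖F x w - F x₀ w‖ := norm_nonneg _
      nlinarith
    · have h4 : Integrable (fun w => (2 * D w) ^ 2) σ :=
        (hDi.const_mul 4).congr (ae_of_all _ fun w => by ring)
      refine ne_of_lt (lt_of_le_of_lt (lintegral_mono fun w => ?_) h4.hasFiniteIntegral)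
      show ENNReal.ofReal ((2 * D w) ^ 2) ≤ ‖(2 * D w) ^ 2‖ₑ
      rw [Real.enorm_eq_ofReal_abs]
      exact ENNReal.ofReal_le_ofReal (le_abs_self _)
    · refine ae_of_all _ fun w => ?_
      have hc : Continuous fun x => ‖F x w - F x₀ w‖ ^ 2 :=
        ((hFc w).sub continuous_const).norm.pow 2
      have h5 := (ENNReal.continuous_ofReal.tendsto 0).comp
        (hc.tendsto' x₀ 0 (by simp))
      rwa [ENNReal.ofReal_zero] at h5
  have heq : ∀ x, eLpNorm (F x - F x₀) 2 σ
      = (∫⁻ w, ENNReal.ofReal (‖F x w - F x₀ w‖ ^ 2) ∂σ) ^ (1 / 2 : ℝ) := by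
    intro x
    rw [eLpNorm_eq_lintegral_rpow_enorm_toReal two_ne_zero ENNReal.ofNat_ne_top]
    have h2 : (2 : ENNReal).toReal = (2 : ℝ) := by norm_num
    rw [h2]
    congr 1
    refine lintegral_congr fun w => ?_
    show ‖F x w - F x₀ w‖ₑ ^ (2:ℝ) = _
    rw [← ofReal_norm,
      ENNReal.ofReal_rpow_of_nonneg (norm_nonneg _) (by norm_num : (0:ℝ) ≤ 2),
      Real.rpow_two]
  simp_rw [heq]
  have h6 := (ENNReal.continuous_rpow_const (y := 1/2)).tendsto (0 : ENNReal)
  rw [ENNReal.zero_rpow_of_pos (by norm_num)] at h6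
  exact h6.comp key

end Helpers

/-- Let `f ∈ C²(ℝ)` admit the representation
`f^[2](s,t,u) = ∫_Ω α(s,w) β(t,w) γ(u,w) dσ(w)` with `α, β, γ` bounded
measurable on `ℝ × Ω`, continuous in the first variable, and
`∫_Ω ‖α(·,w)‖_∞ ‖β(·,w)‖_∞ ‖γ(·,w)‖_∞ dσ(w) < ∞`, where `L²(Ω,σ)` is separable.
Then there exist bounded continuous functions `a : ℝ → L²(Ω,σ)` and
`b : ℝ² → L²(Ω,σ)` with `f^[2](s,t,u) = ⟨a(s), b(t,u)⟩` for all `(s,t,u) ∈ ℝ³`. -/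
theorem besov_type_factorization
    {Ω : Type*} [MeasurableSpace Ω] (σ : Measure Ω)
    [TopologicalSpace.SeparableSpace (Lp ℂ 2 σ)]
    (f : ℝ → ℂ) (hf : ContDiff ℝ 2 f)
    (α β γ : ℝ → Ω → ℂ)
    (hαm : Measurable fun p : ℝ × Ω => α p.1 p.2)
    (hβm : Measurable fun p : ℝ × Ω => β p.1 p.2)
    (hγm : Measurable fun p : ℝ × Ω => γ p.1 p.2)
    (hαb : ∃ C, ∀ s w, ‖α s w‖ ≤ C) (hβb : ∃ C, ∀ s w, ‖β s w‖ ≤ C)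
    (hγb : ∃ C, ∀ s w, ‖γ s w‖ ≤ C)
    (hαc : ∀ w, Continuous fun s => α s w)
    (hβc : ∀ w, Continuous fun s => β s w)
    (hγc : ∀ w, Continuous fun s => γ s w)
    (hint : Integrable
      (fun w => (⨆ s, ‖α s w‖) * (⨆ s, ‖β s w‖) * (⨆ s, ‖γ s w‖)) σ)
    (hrep : ∀ s t u : ℝ,
      dd f 2 (fun j => if j = 0 then s else if j = 1 then t else u) =
        ∫ w, α s w * β t w * γ u w ∂σ) :
    ∃ (a : ℝ → Lp ℂ 2 σ) (b : ℝ × ℝ → Lp ℂ 2 σ),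
      Continuous a ∧ Continuous b ∧
      (∃ C, ∀ s, ‖a s‖ ≤ C) ∧ (∃ C, ∀ p, ‖b p‖ ≤ C) ∧
      ∀ s t u : ℝ,
        (inner ℂ (a s) (b (t, u)) : ℂ) =
          dd f 2 (fun j => if j = 0 then s else if j = 1 then t else u) := by
  classical
  obtain ⟨Cα, hCα⟩ := hαb
  obtain ⟨Cβ, hCβ⟩ := hβb
  obtain ⟨Cγ, hCγ⟩ := hγb
  -- sup functions
  set Mα : Ω → ℝ := fun w => ⨆ s, ‖α s w‖ with hMα_def
  set Mβ : Ω → ℝ := fun w => ⨆ s, ‖β s w‖ with hMβ_def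
  set Mγ : Ω → ℝ := fun w => ⨆ s, ‖γ s w‖ with hMγ_def
  have bddα : ∀ w, BddAbove (Set.range fun s => ‖α s w‖) :=
    fun w => ⟨Cα, by rintro x ⟨s, rfl⟩; exact hCα s w⟩
  have bddβ : ∀ w, BddAbove (Set.range fun s => ‖β s w‖) :=
    fun w => ⟨Cβ, by rintro x ⟨s, rfl⟩; exact hCβ s w⟩
  have bddγ : ∀ w, BddAbove (Set.range fun s => ‖γ s w‖) :=
    fun w => ⟨Cγ, by rintro x ⟨s, rfl⟩; exact hCγ s w⟩
  have hleα : ∀ s w, ‖α s w‖ ≤ Mα w := fun s w => le_ciSup (bddα w) s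
  have hleβ : ∀ s w, ‖β s w‖ ≤ Mβ w := fun s w => le_ciSup (bddβ w) s
  have hleγ : ∀ s w, ‖γ s w‖ ≤ Mγ w := fun s w => le_ciSup (bddγ w) s
  have hMα0 : ∀ w, 0 ≤ Mα w := fun w => (norm_nonneg _).trans (hleα 0 w)
  have hMβ0 : ∀ w, 0 ≤ Mβ w := fun w => (norm_nonneg _).trans (hleβ 0 w)
  have hMγ0 : ∀ w, 0 ≤ Mγ w := fun w => (norm_nonneg _).trans (hleγ 0 w)
  -- measurability of the sup functions
  have slice_α : ∀ s : ℝ, Measurable fun w => α s w :=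
    fun s => hαm.comp (measurable_prodMk_left)
  have slice_β : ∀ s : ℝ, Measurable fun w => β s w :=
    fun s => hβm.comp (measurable_prodMk_left)
  have slice_γ : ∀ s : ℝ, Measurable fun w => γ s w :=
    fun s => hγm.comp (measurable_prodMk_left)
  have hMαm : Measurable Mα := by
    have : Mα = fun w => ⨆ q : ℚ, ‖α (q : ℝ) w‖ := by
      funext w
      exact ciSup_eq_ciSup_rat ((hαc w).norm) (fun s => hCα s w)
    rw [this]
    exact Measurable.iSup fun q => (slice_α q).norm
  have hMβm : Measurable Mβ := by
    have : Mβ = fun w => ⨆ q : ℚ, ‖β (q : ℝ) w‖ := by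
      funext w
      exact ciSup_eq_ciSup_rat ((hβc w).norm) (fun s => hCβ s w)
    rw [this]
    exact Measurable.iSup fun q => (slice_β q).norm
  have hMγm : Measurable Mγ := by
    have : Mγ = fun w => ⨆ q : ℚ, ‖γ (q : ℝ) w‖ := by
      funext w
      exact ciSup_eq_ciSup_rat ((hγc w).norm) (fun s => hCγ s w)
    rw [this]
    exact Measurable.iSup fun q => (slice_γ q).norm
  -- the good set and the weight
  set S : Set Ω := {w | 0 < Mα w ∧ 0 < Mβ w ∧ 0 < Mγ w} with hS_def
  have hSmeas : MeasurableSet S := by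
    refine MeasurableSet.inter (measurableSet_lt measurable_const hMαm)
      (MeasurableSet.inter (measurableSet_lt measurable_const hMβm)
        (measurableSet_lt measurable_const hMγm))
  set δ : Ω → ℝ := fun w => Real.sqrt (Mβ w * Mγ w / Mα w) with hδ_def
  have hδm : Measurable δ := (hMβm.mul hMγm |>.div hMαm).sqrt
  set D : Ω → ℝ := fun w => Real.sqrt (Mα w * Mβ w * Mγ w) with hD_def
  have hDm : Measurable D := ((hMαm.mul hMβm).mul hMγm).sqrt
  have hD0 : ∀ w, 0 ≤ D w := fun w => Real.sqrt_nonneg _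
  have hDi : Integrable (fun w => D w ^ 2) σ := by
    refine hint.congr (ae_of_all _ fun w => ?_)
    show Mα w * Mβ w * Mγ w = D w ^ 2
    exact (Real.sq_sqrt (mul_nonneg (mul_nonneg (hMα0 w) (hMβ0 w)) (hMγ0 w))).symm
  -- definitions of A and B
  set A : ℝ → Ω → ℂ := fun s w =>
    S.indicator (fun w => (starRingEnd ℂ) (α s w) * (δ w : ℂ)) w with hA_def
  set B : ℝ × ℝ → Ω → ℂ := fun p w =>
    S.indicator (fun w => β p.1 w * γ p.2 w * ((δ w : ℂ))⁻¹) w with hB_def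
  have hAm : ∀ s, Measurable (A s) := by
    intro s
    refine Measurable.indicator ?_ hSmeas
    exact ((Complex.continuous_conj.measurable.comp (slice_α s)).mul
      (Complex.measurable_ofReal.comp hδm))
  have hBm : ∀ p : ℝ × ℝ, Measurable (B p) := by
    intro p
    refine Measurable.indicator ?_ hSmeas
    exact ((slice_β p.1).mul (slice_γ p.2)).mul
      ((Complex.measurable_ofReal.comp hδm).inv)
  -- key norm bounds
  have hδpos : ∀ w ∈ S, 0 < δ w := by
    intro w hw
    obtain ⟨h1, h2, h3⟩ := hw
    exact Real.sqrt_pos.mpr (by positivity)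
  have hAle : ∀ s w, ‖A s w‖ ≤ D w := by
    intro s w
    by_cases hw : w ∈ S
    · rw [hA_def]
      simp only [Set.indicator_of_mem hw]
      obtain ⟨h1, h2, h3⟩ := hw
      rw [norm_mul, RCLike.norm_conj, Complex.norm_real,
        Real.norm_of_nonneg (Real.sqrt_nonneg _)]
      calc ‖α s w‖ * δ w ≤ Mα w * δ w :=
            mul_le_mul_of_nonneg_right (hleα s w) (Real.sqrt_nonneg _)
        _ = Real.sqrt (Mα w ^ 2) * Real.sqrt (Mβ w * Mγ w / Mα w) := by
            rw [Real.sqrt_sq (hMα0 w)]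
        _ = Real.sqrt (Mα w ^ 2 * (Mβ w * Mγ w / Mα w)) := by
            rw [← Real.sqrt_mul (sq_nonneg _)]
        _ = D w := by
            rw [hD_def]
            congr 1
            field_simp
    · rw [hA_def]
      simp only [Set.indicator_of_notMem hw]
      simpa using hD0 w
  have hBle : ∀ p : ℝ × ℝ, ∀ w, ‖B p w‖ ≤ D w := by
    intro p w
    by_cases hw : w ∈ S
    · rw [hB_def]
      simp only [Set.indicator_of_mem hw]
      obtain ⟨h1, h2, h3⟩ := hw
      have hδp := Real.sqrt_pos.mpr (show 0 < Mβ w * Mγ w / Mα w by positivity)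
      rw [norm_mul, norm_mul, norm_inv, Complex.norm_real,
        Real.norm_of_nonneg (Real.sqrt_nonneg _)]
      have hδinv : (Real.sqrt (Mβ w * Mγ w / Mα w))⁻¹
          = Real.sqrt (Mα w / (Mβ w * Mγ w)) := by
        rw [← Real.sqrt_inv]
        congr 1
        field_simp
      calc ‖β p.1 w‖ * ‖γ p.2 w‖ * (δ w)⁻¹ ≤ Mβ w * Mγ w * (δ w)⁻¹ := by
            refine mul_le_mul_of_nonneg_right ?_ (by positivity)
            exact mul_le_mul (hleβ _ w) (hleγ _ w) (norm_nonneg _) (hMβ0 w)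
        _ = Real.sqrt ((Mβ w * Mγ w) ^ 2) * Real.sqrt (Mα w / (Mβ w * Mγ w)) := by
            rw [hδ_def, hδinv, Real.sqrt_sq (by positivity)]
        _ = Real.sqrt ((Mβ w * Mγ w) ^ 2 * (Mα w / (Mβ w * Mγ w))) := by
            rw [← Real.sqrt_mul (sq_nonneg _)]
        _ = D w := by
            rw [hD_def]
            congr 1
            field_simp
    · rw [hB_def]
      simp only [Set.indicator_of_notMem hw]
      simpa using hD0 w
  -- pointwise product identity
  have hprod : ∀ (s t u : ℝ) (w : Ω),
      (starRingEnd ℂ) (A s w) * B (t, u) w = α s w * β t w * γ u w := by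
    intro s t u w
    by_cases hw : w ∈ S
    · rw [hA_def, hB_def]
      simp only [Set.indicator_of_mem hw]
      have hδne : ((δ w : ℝ) : ℂ) ≠ 0 := by
        exact_mod_cast (hδpos w hw).ne'
      rw [map_mul, Complex.conj_conj, Complex.conj_ofReal]
      field_simp
    · rw [hA_def, hB_def]
      simp only [Set.indicator_of_notMem hw, map_zero, zero_mul]
      rw [hS_def] at hw
      simp only [Set.mem_setOf_eq, not_and_or, not_lt] at hw
      rcases hw with h | h | h
      · have : α s w = 0 := norm_le_zero_iff.mp ((hleα s w).trans h)
        rw [this]; ring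
      · have : β t w = 0 := norm_le_zero_iff.mp ((hleβ t w).trans h)
        rw [this]; ring
      · have : γ u w = 0 := norm_le_zero_iff.mp ((hleγ u w).trans h)
        rw [this]; ring
  -- MemLp
  have hD2 : MemLp D 2 σ :=
    (memLp_two_iff_integrable_sq hDm.aestronglyMeasurable).mpr hDi
  have memA : ∀ s, MemLp (A s) 2 σ := by
    intro s
    refine MemLp.of_le hD2 (hAm s).aestronglyMeasurable (ae_of_all _ fun w => ?_)
    rw [Real.norm_of_nonneg (hD0 w)]
    exact hAle s w
  have memB : ∀ p : ℝ × ℝ, MemLp (B p) 2 σ := by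
    intro p
    refine MemLp.of_le hD2 (hBm p).aestronglyMeasurable (ae_of_all _ fun w => ?_)
    rw [Real.norm_of_nonneg (hD0 w)]
    exact hBle p w
  refine ⟨fun s => (memA s).toLp (A s), fun p => (memB p).toLp (B p), ?_, ?_, ?_, ?_, ?_⟩
  · -- continuity of a
    refine continuous_toLp_of_dominated hAm ?_ hAle hDi memA
    intro w
    by_cases hw : w ∈ S
    · have : (fun s => A s w) = fun s => (starRingEnd ℂ) (α s w) * (δ w : ℂ) := by
        funext s; rw [hA_def]; simp [Set.indicator_of_mem hw]
      rw [this]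
      exact ((Complex.continuous_conj.comp (hαc w)).mul continuous_const)
    · have : (fun s => A s w) = fun _ => (0 : ℂ) := by
        funext s; rw [hA_def]; simp [Set.indicator_of_notMem hw]
      rw [this]; exact continuous_const
  · -- continuity of b
    refine continuous_toLp_of_dominated hBm ?_ hBle hDi memB
    intro w
    by_cases hw : w ∈ S
    · have : (fun p : ℝ × ℝ => B p w)
          = fun p : ℝ × ℝ => β p.1 w * γ p.2 w * ((δ w : ℂ))⁻¹ := by
        funext p; rw [hB_def]; simp [Set.indicator_of_mem hw]
      rw [this]
      exact (((hβc w).comp continuous_fst).mul ((hγc w).comp continuous_snd)).mul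
        continuous_const
    · have : (fun p : ℝ × ℝ => B p w) = fun _ => (0 : ℂ) := by
        funext p; rw [hB_def]; simp [Set.indicator_of_notMem hw]
      rw [this]; exact continuous_const
  · -- bound for a
    refine ⟨(eLpNorm D 2 σ).toReal, fun s => ?_⟩
    rw [Lp.norm_toLp]
    refine ENNReal.toReal_mono hD2.eLpNorm_ne_top ?_
    refine eLpNorm_mono fun w => ?_
    rw [Real.norm_of_nonneg (hD0 w)]
    exact hAle s w
  · -- bound for b
    refine ⟨(eLpNorm D 2 σ).toReal, fun p => ?_⟩
    rw [Lp.norm_toLp]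
    refine ENNReal.toReal_mono hD2.eLpNorm_ne_top ?_
    refine eLpNorm_mono fun w => ?_
    rw [Real.norm_of_nonneg (hD0 w)]
    exact hBle p w
  · -- inner product identity
    intro s t u
    rw [hrep s t u]
    rw [MeasureTheory.L2.inner_def]
    refine integral_congr_ae ?_
    filter_upwards [MemLp.coeFn_toLp (memA s), MemLp.coeFn_toLp (memB (t, u))]
      with w h1 h2
    rw [RCLike.inner_apply', h1, h2]
    exact hprod s t u w
end

section
/- The span of the functions {f_m'' and conj(f_m)'' : m ≥ 1}, where f_m(x) = (x-i)^{-m}, equals the span of {(x-i)^{-k}, (x+i)^{-k} : k ≥ 3}, and this span is dense in C₀(ℝ) with respect to the uniform norm. -/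
open Complex Filter

/-- `f_m(x) = 1/(x-i)^m`. -/
noncomputable def fmi (m : ℕ) (x : ℝ) : ℂ := 1 / ((x : ℂ) - Complex.I) ^ m

/-- The set `{f_m'', conj(f_m)'' : m ≥ 1}`. -/
noncomputable def S1 : Set (ℝ → ℂ) :=
  {g | ∃ m : ℕ, 1 ≤ m ∧
    (g = deriv (deriv (fmi m)) ∨
      g = deriv (deriv (fun x => starRingEnd ℂ (fmi m x))))}

/-- The set `{x ↦ (x-i)^{-k}, x ↦ (x+i)^{-k} : k ≥ 3}`. -/
noncomputable def S2 : Set (ℝ → ℂ) :=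
  {g | ∃ k : ℕ, 3 ≤ k ∧
    (g = (fun x : ℝ => 1 / ((x : ℂ) - Complex.I) ^ k) ∨
      g = (fun x : ℝ => 1 / ((x : ℂ) + Complex.I) ^ k))}

open Polynomial ContinuousMapZero

lemma ofReal_sub_ne (c : ℂ) (hc : c.im ≠ 0) (x : ℝ) : ((x:ℂ) - c) ≠ 0 := by
  intro h; apply hc
  have := congrArg Complex.im h
  simpa using this.symm

lemma hasDerivAt_sub_zpow (c : ℂ) (hc : c.im ≠ 0) (n : ℤ) (x : ℝ) :
    HasDerivAt (fun x : ℝ => ((x:ℂ) - c) ^ n) ((n : ℂ) * ((x:ℂ) - c) ^ (n - 1)) x := by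
  have h1 : HasDerivAt (fun z : ℂ => (z - c) ^ n) ((n : ℂ) * ((x:ℂ) - c) ^ (n - 1)) (x : ℂ) := by
    simpa [Function.comp_def] using (hasDerivAt_zpow n ((x:ℂ) - c) (Or.inl (ofReal_sub_ne c hc x))).comp (x:ℂ)
      ((hasDerivAt_id (x:ℂ)).sub_const c)
  exact h1.comp_ofReal

lemma deriv_sub_zpow (c : ℂ) (hc : c.im ≠ 0) (n : ℤ) :
    deriv (fun x : ℝ => ((x:ℂ) - c) ^ n) = fun x : ℝ => (n : ℂ) * ((x:ℂ) - c) ^ (n - 1) :=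
  funext fun x => (hasDerivAt_sub_zpow c hc n x).deriv

lemma deriv2_sub_zpow (c : ℂ) (hc : c.im ≠ 0) (n : ℤ) :
    deriv (deriv (fun x : ℝ => ((x:ℂ) - c) ^ n)) =
      fun x : ℝ => ((n : ℂ) * (n - 1)) * ((x:ℂ) - c) ^ (n - 2) := by
  rw [deriv_sub_zpow c hc n]
  funext x
  have : HasDerivAt (fun x : ℝ => (n : ℂ) * ((x:ℂ) - c) ^ (n-1))
      ((n:ℂ) * ((n - 1 : ℤ) * ((x:ℂ) - c) ^ (n - 1 - 1))) x :=
    (hasDerivAt_sub_zpow c hc (n-1) x).const_mul _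
  rw [this.deriv]
  push_cast
  ring_nf

lemma one_div_pow_eq (c : ℂ) (m : ℕ) :
    (fun x : ℝ => 1 / ((x:ℂ) - c) ^ m) = fun x : ℝ => ((x:ℂ) - c) ^ (-(m:ℤ)) := by
  funext x
  rw [zpow_neg, zpow_natCast, one_div]

lemma deriv2_gen (c : ℂ) (hc : c.im ≠ 0) (m : ℕ) :
    deriv (deriv (fun x : ℝ => 1 / ((x:ℂ) - c) ^ m)) =
      fun x : ℝ => ((m * (m+1) : ℕ) : ℂ) * (1 / ((x:ℂ) - c) ^ (m + 2)) := by
  rw [one_div_pow_eq, deriv2_sub_zpow c hc]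
  funext x
  rw [one_div, ← zpow_natCast (((x:ℂ) - c)), ← zpow_neg]
  have h1 : (-(m:ℤ)) - 2 = -((m:ℕ) + 2 : ℕ) := by push_cast; ring
  rw [h1]
  push_cast
  ring_nf

lemma conj_fmi (m : ℕ) :
    (fun x : ℝ => starRingEnd ℂ (fmi m x)) = fun x : ℝ => 1 / ((x:ℂ) + I) ^ m := by
  funext x
  simp [fmi, map_pow, Complex.conj_I, sub_eq_add_neg]

lemma spans_eq : Submodule.span ℂ S1 = Submodule.span ℂ S2 := by
  apply le_antisymm
  · rw [Submodule.span_le]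
    rintro g ⟨m, hm, hg | hg⟩
    · have : g = ((m * (m+1) : ℕ) : ℂ) • (fun x : ℝ => 1 / ((x:ℂ) - I) ^ (m + 2)) := by
        have hf : fmi m = fun x : ℝ => 1 / ((x:ℂ) - I) ^ m := rfl
        rw [hg, hf]
        have := deriv2_gen I (by simp) m
        simp only [this]; rfl
      rw [this]
      exact Submodule.smul_mem _ _ (Submodule.subset_span ⟨m + 2, by omega, Or.inl rfl⟩)
    · have : g = ((m * (m+1) : ℕ) : ℂ) • (fun x : ℝ => 1 / ((x:ℂ) + I) ^ (m + 2)) := by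
        rw [hg, conj_fmi]
        have h2 : (fun x : ℝ => 1 / ((x:ℂ) + I) ^ m) = fun x : ℝ => 1 / ((x:ℂ) - (-I)) ^ m := by
          funext x; rw [sub_neg_eq_add]
        rw [h2]
        have := deriv2_gen (-I) (by simp) m
        simp only [this]
        funext x; rw [sub_neg_eq_add]; rfl
      rw [this]
      exact Submodule.smul_mem _ _ (Submodule.subset_span ⟨m + 2, by omega, Or.inr rfl⟩)
  · rw [Submodule.span_le]
    rintro g ⟨k, hk, hg | hg⟩
    · have hne : (((k-2) * ((k-2)+1) : ℕ) : ℂ) ≠ 0 := by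
        have : (k-2) * ((k-2)+1) ≠ 0 := Nat.mul_ne_zero (by omega) (by omega)
        exact_mod_cast this
      have hd : deriv (deriv (fmi (k-2))) =
          (((k-2) * ((k-2)+1) : ℕ) : ℂ) • (fun x : ℝ => 1 / ((x:ℂ) - I) ^ ((k-2) + 2)) := by
        have hf : fmi (k-2) = fun x : ℝ => 1 / ((x:ℂ) - I) ^ (k-2) := rfl
        rw [hf, deriv2_gen I (by simp) (k-2)]; rfl
      have hk2 : (k - 2) + 2 = k := by omega
      rw [hg, ← hk2]
      have : (fun x : ℝ => 1 / ((x:ℂ) - I) ^ ((k-2)+2)) =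
          ((((k-2) * ((k-2)+1) : ℕ) : ℂ))⁻¹ • deriv (deriv (fmi (k-2))) := by
        rw [hd, smul_smul, inv_mul_cancel₀ hne, one_smul]
      rw [this]
      exact Submodule.smul_mem _ _
        (Submodule.subset_span ⟨k-2, by omega, Or.inl rfl⟩)
    · have hne : (((k-2) * ((k-2)+1) : ℕ) : ℂ) ≠ 0 := by
        have : (k-2) * ((k-2)+1) ≠ 0 := Nat.mul_ne_zero (by omega) (by omega)
        exact_mod_cast this
      have hd : deriv (deriv (fun x : ℝ => starRingEnd ℂ (fmi (k-2) x))) =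
          (((k-2) * ((k-2)+1) : ℕ) : ℂ) • (fun x : ℝ => 1 / ((x:ℂ) + I) ^ ((k-2) + 2)) := by
        rw [conj_fmi]
        have h2 : (fun x : ℝ => 1 / ((x:ℂ) + I) ^ (k-2)) =
            fun x : ℝ => 1 / ((x:ℂ) - (-I)) ^ (k-2) := by
          funext x; rw [sub_neg_eq_add]
        rw [h2, deriv2_gen (-I) (by simp) (k-2)]
        funext x; rw [sub_neg_eq_add]; rfl
      have hk2 : (k - 2) + 2 = k := by omega
      rw [hg, ← hk2]
      have : (fun x : ℝ => 1 / ((x:ℂ) + I) ^ ((k-2)+2)) =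
          ((((k-2) * ((k-2)+1) : ℕ) : ℂ))⁻¹ • deriv (deriv (fun x : ℝ => starRingEnd ℂ (fmi (k-2) x))) := by
        rw [hd, smul_smul, inv_mul_cancel₀ hne, one_smul]
      rw [this]
      exact Submodule.smul_mem _ _
        (Submodule.subset_span ⟨k-2, by omega, Or.inr rfl⟩)


lemma aux_pow_bound (t : ℝ) (ht0 : 0 ≤ t) (ht1 : t ≤ 1) (n : ℕ) :
    (1 + n * t) * (1 - t) ^ n ≤ 1 := by
  induction n with
  | zero => simp
  | succ n ih =>
    have hp : (0:ℝ) ≤ (1 - t) ^ n := pow_nonneg (by linarith) n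
    have key : (1 + (n+1) * t) * (1 - t) ^ (n+1) ≤ (1 + n * t) * (1 - t) ^ n := by
      rw [pow_succ]
      nlinarith [sq_nonneg t, mul_nonneg (mul_nonneg (Nat.cast_nonneg (α := ℝ) n) (mul_self_nonneg t)) hp]
    calc (1 + ((n:ℕ)+1 : ℕ) * t) * (1 - t) ^ (n+1)
        = (1 + ((n:ℝ)+1) * t) * (1 - t) ^ (n+1) := by push_cast; ring_nf
      _ ≤ (1 + n * t) * (1 - t) ^ n := key
      _ ≤ 1 := ih

lemma t_pow_bound (t : ℝ) (ht0 : 0 ≤ t) (ht1 : t ≤ 1) (n : ℕ) (hn : 1 ≤ n) :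
    t * (1 - t) ^ n ≤ 1 / n := by
  have hp : (0:ℝ) ≤ (1 - t) ^ n := pow_nonneg (by linarith) n
  have h1 := aux_pow_bound t ht0 ht1 n
  have hn' : (0:ℝ) < n := by exact_mod_cast hn
  rw [le_div_iff₀ hn']
  calc t * (1 - t) ^ n * n = (n * t) * (1-t)^n := by ring
    _ ≤ (1 + n * t) * (1 - t) ^ n := by nlinarith
    _ ≤ 1 := h1


-- pointwise facts about w = ((x:ℂ) - I)⁻¹
lemma w_normSq_eq_im (x : ℝ) : normSq (((x:ℂ) - I)⁻¹) = (((x:ℂ) - I)⁻¹).im := by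
  rw [Complex.normSq_inv, Complex.inv_im]
  have h1 : ((x:ℂ) - I).im = -1 := by simp
  rw [h1]
  simp

lemma w_norm_sq (x : ℝ) : ‖((x:ℂ) - I)⁻¹‖ ^ 2 = (((x:ℂ) - I)⁻¹).im := by
  rw [Complex.sq_norm, w_normSq_eq_im]

lemma w_im_nonneg (x : ℝ) : 0 ≤ (((x:ℂ) - I)⁻¹).im := by
  rw [← w_normSq_eq_im]; exact normSq_nonneg _

lemma w_im_le_one (x : ℝ) : (((x:ℂ) - I)⁻¹).im ≤ 1 := by
  rw [← w_normSq_eq_im, Complex.normSq_inv]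
  have h2 : 1 ≤ normSq ((x:ℂ) - I) := by
    rw [Complex.normSq_apply]
    have : ((x:ℂ) - I).im = -1 := by simp
    rw [this]
    nlinarith [sq_nonneg (((x:ℂ) - I).re)]
  rw [inv_le_one_iff₀]
  right; exact h2

lemma u_norm_sq (x : ℝ) :
    ‖1 + I * ((x:ℂ) - I)⁻¹‖ ^ 2 = 1 - ‖((x:ℂ) - I)⁻¹‖ ^ 2 := by
  set w := ((x:ℂ) - I)⁻¹ with hw
  have hrel : w.re ^ 2 + w.im ^ 2 = w.im := by
    have := w_normSq_eq_im x
    rw [Complex.normSq_apply] at this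
    nlinarith [this]
  have h1 : ‖1 + I * w‖ ^ 2 = normSq (1 + I * w) := Complex.sq_norm _
  have h2 : ‖w‖ ^ 2 = normSq w := Complex.sq_norm _
  rw [h1, h2, Complex.normSq_apply, Complex.normSq_apply]
  simp only [Complex.add_re, Complex.add_im, Complex.one_re, Complex.one_im, Complex.mul_re,
    Complex.mul_im, Complex.I_re, Complex.I_im]
  ring_nf
  nlinarith [hrel]

-- polynomial membership
lemma poly_mem_span (r : Polynomial ℂ) :
    (fun x : ℝ => (((x:ℂ) - I)⁻¹) ^ 3 * r.eval (((x:ℂ) - I)⁻¹)) ∈ Submodule.span ℂ S2 := by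
  induction r using Polynomial.induction_on' with
  | add p q hp hq =>
    have : (fun x : ℝ => (((x:ℂ) - I)⁻¹) ^ 3 * (p + q).eval (((x:ℂ) - I)⁻¹)) =
        (fun x : ℝ => (((x:ℂ) - I)⁻¹) ^ 3 * p.eval (((x:ℂ) - I)⁻¹)) +
        (fun x : ℝ => (((x:ℂ) - I)⁻¹) ^ 3 * q.eval (((x:ℂ) - I)⁻¹)) := by
      funext x; simp [eval_add]; ring
    rw [this]; exact Submodule.add_mem _ hp hq
  | monomial j c =>
    have : (fun x : ℝ => (((x:ℂ) - I)⁻¹) ^ 3 * (monomial j c).eval (((x:ℂ) - I)⁻¹)) =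
        c • (fun x : ℝ => 1 / ((x:ℂ) - I) ^ (3 + j)) := by
      funext x
      have hpow : (1:ℂ) / ((x:ℂ) - I) ^ (3 + j) = (((x:ℂ) - I)⁻¹)^3 * (((x:ℂ)-I)⁻¹)^j := by
        rw [one_div, ← inv_pow, pow_add]
      simp only [eval_monomial, Pi.smul_apply, smul_eq_mul, hpow]
      ring
    rw [this]
    exact Submodule.smul_mem _ _ (Submodule.subset_span ⟨3 + j, by omega, Or.inl rfl⟩)


noncomputable def S2' : Set (ℝ → ℂ) :=
  {g | ∃ k : ℕ, 1 ≤ k ∧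
    (g = (fun x : ℝ => 1 / ((x : ℂ) - Complex.I) ^ k) ∨
      g = (fun x : ℝ => 1 / ((x : ℂ) + Complex.I) ^ k))}

lemma conj_gen_sub (k : ℕ) :
    (fun x : ℝ => starRingEnd ℂ (1 / ((x:ℂ) - I) ^ k)) = fun x : ℝ => 1 / ((x:ℂ) + I) ^ k := by
  funext x
  simp [map_div₀, map_pow, map_sub, Complex.conj_ofReal, Complex.conj_I, sub_eq_add_neg]

lemma conj_gen_add (k : ℕ) :
    (fun x : ℝ => starRingEnd ℂ (1 / ((x:ℂ) + I) ^ k)) = fun x : ℝ => 1 / ((x:ℂ) - I) ^ k := by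
  funext x
  simp [map_div₀, map_pow, map_add, Complex.conj_ofReal, Complex.conj_I, sub_eq_add_neg]

lemma conj_mem_span {S : Set (ℝ → ℂ)}
    (hS : ∀ g ∈ S, (fun x => starRingEnd ℂ (g x)) ∈ S) {f : ℝ → ℂ}
    (hf : f ∈ Submodule.span ℂ S) :
    (fun x => starRingEnd ℂ (f x)) ∈ Submodule.span ℂ S := by
  induction hf using Submodule.span_induction with
  | mem g hg => exact Submodule.subset_span (hS g hg)
  | zero =>
    have : (fun x : ℝ => starRingEnd ℂ ((0 : ℝ → ℂ) x)) = 0 := by funext x; simp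
    rw [this]; exact Submodule.zero_mem _
  | add f g _ _ hf' hg' =>
    have : (fun x => starRingEnd ℂ ((f + g) x)) =
        (fun x => starRingEnd ℂ (f x)) + (fun x => starRingEnd ℂ (g x)) := by
      funext x; simp
    rw [this]; exact Submodule.add_mem _ hf' hg'
  | smul c f _ hf' =>
    have : (fun x => starRingEnd ℂ ((c • f) x)) =
        (starRingEnd ℂ c) • (fun x => starRingEnd ℂ (f x)) := by
      funext x; simp
    rw [this]; exact Submodule.smul_mem _ _ hf'

lemma S2_conj_closed : ∀ g ∈ S2, (fun x => starRingEnd ℂ (g x)) ∈ S2 := by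
  rintro g ⟨k, hk, rfl | rfl⟩
  · exact ⟨k, hk, Or.inr (conj_gen_sub k)⟩
  · exact ⟨k, hk, Or.inl (conj_gen_add k)⟩

lemma S2'_conj_closed : ∀ g ∈ S2', (fun x => starRingEnd ℂ (g x)) ∈ S2' := by
  rintro g ⟨k, hk, rfl | rfl⟩
  · exact ⟨k, hk, Or.inr (conj_gen_sub k)⟩
  · exact ⟨k, hk, Or.inl (conj_gen_add k)⟩

lemma sub_I_ne (x : ℝ) : ((x:ℂ) - I) ≠ 0 := by
  intro h
  have := congrArg Complex.im h
  simp at this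

lemma add_I_ne (x : ℝ) : ((x:ℂ) + I) ≠ 0 := by
  intro h
  have := congrArg Complex.im h
  simp at this

lemma pf_identity (x : ℝ) (a b : ℕ) :
    (1 / ((x:ℂ)-I)^(a+1)) * (1 / ((x:ℂ)+I)^(b+1)) =
      (2*I)⁻¹ * ((1 / ((x:ℂ)-I)^(a+1)) * (1/((x:ℂ)+I)^b) -
        (1/((x:ℂ)-I)^a) * (1/((x:ℂ)+I)^(b+1))) := by
  have h1 := sub_I_ne x
  have h2 := add_I_ne x
  have h3 : (2*I : ℂ) ≠ 0 := by simp [Complex.I_ne_zero]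
  have hAB : ((x:ℂ)-I)⁻¹ - ((x:ℂ)+I)⁻¹ = 2*I*(((x:ℂ)-I)⁻¹*((x:ℂ)+I)⁻¹) := by
    field_simp
    ring
  simp only [one_div, ← inv_pow]
  rw [eq_comm, inv_mul_eq_iff_eq_mul₀ h3]
  linear_combination ((((x:ℂ)-I)⁻¹)^a * (((x:ℂ)+I)⁻¹)^b) * hAB

lemma mixed_mem (n : ℕ) : ∀ (a b : ℕ), a + b = n → 1 ≤ a + b →
    (fun x : ℝ => (1 / ((x:ℂ)-I)^a) * (1 / ((x:ℂ)+I)^b)) ∈ Submodule.span ℂ S2' := by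
  induction n using Nat.strong_induction_on with
  | _ n ih =>
  intro a b hab h1
  rcases Nat.eq_zero_or_pos a with ha | ha
  · subst ha
    have : (fun x : ℝ => (1 / ((x:ℂ)-I)^0) * (1 / ((x:ℂ)+I)^b)) =
        fun x : ℝ => 1 / ((x:ℂ)+I)^b := by funext x; simp
    rw [this]
    exact Submodule.subset_span ⟨b, by omega, Or.inr rfl⟩
  rcases Nat.eq_zero_or_pos b with hb | hb
  · subst hb
    have : (fun x : ℝ => (1 / ((x:ℂ)-I)^a) * (1 / ((x:ℂ)+I)^0)) =
        fun x : ℝ => 1 / ((x:ℂ)-I)^a := by funext x; simp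
    rw [this]
    exact Submodule.subset_span ⟨a, by omega, Or.inl rfl⟩
  obtain ⟨a', rfl⟩ : ∃ a', a = a' + 1 := ⟨a - 1, by omega⟩
  obtain ⟨b', rfl⟩ : ∃ b', b = b' + 1 := ⟨b - 1, by omega⟩
  have key : (fun x : ℝ => (1 / ((x:ℂ)-I)^(a'+1)) * (1 / ((x:ℂ)+I)^(b'+1))) =
      ((2*I : ℂ))⁻¹ • ((fun x : ℝ => (1 / ((x:ℂ)-I)^(a'+1)) * (1/((x:ℂ)+I)^b')) -
        (fun x : ℝ => (1/((x:ℂ)-I)^a') * (1/((x:ℂ)+I)^(b'+1)))) := by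
    funext x
    simp only [Pi.smul_apply, Pi.sub_apply, smul_eq_mul]
    exact pf_identity x a' b'
  rw [key]
  refine Submodule.smul_mem _ _ (Submodule.sub_mem _ ?_ ?_)
  · exact ih (a' + 1 + b') (by omega) (a'+1) b' rfl (by omega)
  · exact ih (a' + (b'+1)) (by omega) a' (b'+1) rfl (by omega)

lemma mul_gen_mem : ∀ f ∈ S2', ∀ g ∈ S2', f * g ∈ Submodule.span ℂ S2' := by
  rintro f ⟨k, hk, rfl | rfl⟩ g ⟨j, hj, rfl | rfl⟩
  · have : ((fun x : ℝ => 1 / ((x:ℂ)-I)^k) * (fun x : ℝ => 1 / ((x:ℂ)-I)^j)) =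
        fun x : ℝ => 1 / ((x:ℂ)-I)^(k+j) := by
      funext x
      rw [Pi.mul_apply, div_mul_div_comm, one_mul, ← pow_add]
    rw [this]
    exact Submodule.subset_span ⟨k+j, by omega, Or.inl rfl⟩
  · exact mixed_mem (k+j) k j rfl (by omega)
  · have : ((fun x : ℝ => 1 / ((x:ℂ)+I)^k) * (fun x : ℝ => 1 / ((x:ℂ)-I)^j)) =
        fun x : ℝ => (1 / ((x:ℂ)-I)^j) * (1 / ((x:ℂ)+I)^k) := by
      funext x; rw [Pi.mul_apply, mul_comm]
    rw [this]
    exact mixed_mem (j+k) j k rfl (by omega)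
  · have : ((fun x : ℝ => 1 / ((x:ℂ)+I)^k) * (fun x : ℝ => 1 / ((x:ℂ)+I)^j)) =
        fun x : ℝ => 1 / ((x:ℂ)+I)^(k+j) := by
      funext x
      rw [Pi.mul_apply, div_mul_div_comm, one_mul, ← pow_add]
    rw [this]
    exact Submodule.subset_span ⟨k+j, by omega, Or.inr rfl⟩

lemma mul_mem_span' {f g : ℝ → ℂ} (hf : f ∈ Submodule.span ℂ S2')
    (hg : g ∈ Submodule.span ℂ S2') : f * g ∈ Submodule.span ℂ S2' := by
  induction hf using Submodule.span_induction generalizing g with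
  | mem f hf =>
    induction hg using Submodule.span_induction with
    | mem g hg => exact mul_gen_mem f hf g hg
    | zero => rw [mul_zero]; exact Submodule.zero_mem _
    | add g₁ g₂ _ _ h1 h2 => rw [mul_add]; exact Submodule.add_mem _ h1 h2
    | smul c g₁ _ h1 => rw [mul_smul_comm]; exact Submodule.smul_mem _ _ h1
  | zero => rw [zero_mul]; exact Submodule.zero_mem _
  | add f₁ f₂ _ _ h1 h2 => rw [add_mul]; exact Submodule.add_mem _ (h1 hg) (h2 hg)
  | smul c f₁ _ h1 => rw [smul_mul_assoc]; exact Submodule.smul_mem _ _ (h1 hg)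


set_option maxHeartbeats 1000000 in
lemma gen_approx (k : ℕ) (hk : 1 ≤ k) (δ : ℝ) (hδ : 0 < δ) :
    ∃ h ∈ Submodule.span ℂ S2, ∀ x : ℝ, ‖(((x:ℂ) - I)⁻¹)^k - h x‖ ≤ δ := by
  -- choose n large
  obtain ⟨m, hm⟩ := exists_nat_ge ((7/δ)^2)
  set n := max m 1 with hndef
  have hn1 : 1 ≤ n := le_max_right m 1
  have hnpos : (0:ℝ) < n := by exact_mod_cast hn1
  have hsqrt : 7 / Real.sqrt n ≤ δ := by
    have h1 : (7/δ)^2 ≤ (n:ℝ) := le_trans hm (by exact_mod_cast le_max_left m 1)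
    have h2 : 7/δ ≤ Real.sqrt n := by
      rw [show (7:ℝ)/δ = Real.sqrt ((7/δ)^2) by
        rw [Real.sqrt_sq (by positivity)]]
      exact Real.sqrt_le_sqrt h1
    have hs : 0 < Real.sqrt n := Real.sqrt_pos.mpr hnpos
    rw [div_le_iff₀ hs]
    calc (7:ℝ) = (7/δ) * δ := by field_simp
      _ ≤ Real.sqrt n * δ := by
          exact mul_le_mul_of_nonneg_right h2 (le_of_lt hδ)
      _ = δ * Real.sqrt n := by ring
  -- polynomial
  set p : Polynomial ℂ := 1 - (1 + C I * X)^n with hpdef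
  have hp0 : p.coeff 0 = 0 := by
    rw [Polynomial.coeff_zero_eq_eval_zero]
    simp [hpdef]
  obtain ⟨p₁, hp₁⟩ := Polynomial.X_dvd_iff.mpr hp0
  refine ⟨fun x => (((x:ℂ)-I)⁻¹)^3 * (X^k * p₁^3).eval (((x:ℂ)-I)⁻¹), poly_mem_span _, ?_⟩
  intro x
  set w : ℂ := ((x:ℂ)-I)⁻¹ with hwdef
  set u : ℂ := 1 + I * w with hudef
  -- identity
  have hev : w * p₁.eval w = 1 - u^n := by
    have h1 : p.eval w = 1 - u^n := by simp [hpdef, hudef]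
    rw [hp₁] at h1
    simpa using h1
  have heval : w^3 * (X^k * p₁^3).eval w = w^k * (1 - u^n)^3 := by
    rw [← hev]
    simp only [eval_mul, eval_pow, eval_X]
    ring
  have hx : (fun x : ℝ => (((x:ℂ)-I)⁻¹)^3 * (X^k * p₁^3).eval (((x:ℂ)-I)⁻¹)) x
      = w^3 * (X^k*p₁^3).eval w := rfl
  have hd : w^k - w^k * (1 - u^n)^3 = w^k * u^n * (3 - 3*u^n + (u^n)^2) := by ring
  rw [hx, heval, hd]
  -- norms
  have hw0 : 0 ≤ ‖w‖ := norm_nonneg w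
  have hwsq : ‖w‖^2 ≤ 1 := by rw [w_norm_sq x]; exact w_im_le_one x
  have hw1 : ‖w‖ ≤ 1 := by nlinarith
  have husq : ‖u‖^2 = 1 - ‖w‖^2 := u_norm_sq x
  have hu0 : 0 ≤ ‖u‖ := norm_nonneg u
  have hu1 : ‖u‖ ≤ 1 := by nlinarith [sq_nonneg ‖w‖]
  have hwk : ‖w‖^k ≤ ‖w‖ := pow_le_of_le_one hw0 hw1 (by omega)
  have hun : ‖u‖^n ≤ 1 := pow_le_one₀ hu0 hu1
  have hkey : ‖w‖ * ‖u‖^n ≤ 1 / Real.sqrt n := by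
    have hsq : (‖w‖ * ‖u‖^n)^2 = (‖w‖^2) * (1 - ‖w‖^2)^n := by
      rw [mul_pow, ← pow_mul, mul_comm n 2, pow_mul, husq]
    have hb : (‖w‖ * ‖u‖^n)^2 ≤ 1/n := by
      rw [hsq]
      exact t_pow_bound _ (sq_nonneg _) hwsq n hn1
    have h0 : 0 ≤ ‖w‖ * ‖u‖^n := mul_nonneg hw0 (pow_nonneg hu0 n)
    have : ‖w‖ * ‖u‖^n ≤ Real.sqrt (1/n) := by
      rw [show ‖w‖ * ‖u‖^n = Real.sqrt ((‖w‖ * ‖u‖^n)^2) by rw [Real.sqrt_sq h0]]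
      exact Real.sqrt_le_sqrt hb
    rwa [one_div, Real.sqrt_inv, ← one_div] at this
  have htri : ‖(3:ℂ) - 3*u^n + (u^n)^2‖ ≤ 7 := by
    calc ‖(3:ℂ) - 3*u^n + (u^n)^2‖ ≤ ‖(3:ℂ) - 3*u^n‖ + ‖(u^n)^2‖ := norm_add_le _ _
      _ ≤ ‖(3:ℂ)‖ + ‖3*u^n‖ + ‖(u^n)^2‖ := by
          have := norm_sub_le ((3:ℂ)) (3*u^n)
          linarith
      _ ≤ 3 + 3 + 1 := by
          have h1 : ‖(3:ℂ)‖ = 3 := by norm_num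
          have h2 : ‖(3:ℂ)*u^n‖ ≤ 3 := by
            rw [norm_mul, h1, norm_pow]
            nlinarith
          have h3 : ‖(u^n)^2‖ ≤ 1 := by
            rw [norm_pow, norm_pow]
            exact pow_le_one₀ (pow_nonneg hu0 n) hun
          linarith
      _ = 7 := by norm_num
  calc ‖w^k * u^n * (3 - 3*u^n + (u^n)^2)‖
      = ‖w‖^k * ‖u‖^n * ‖(3:ℂ) - 3*u^n + (u^n)^2‖ := by
        rw [norm_mul, norm_mul, norm_pow, norm_pow]
    _ ≤ ‖w‖ * ‖u‖^n * 7 := by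
        have h1 : ‖w‖^k * ‖u‖^n ≤ ‖w‖ * ‖u‖^n :=
          mul_le_mul_of_nonneg_right hwk (pow_nonneg hu0 n)
        have h2 : 0 ≤ ‖w‖^k * ‖u‖^n := mul_nonneg (pow_nonneg hw0 k) (pow_nonneg hu0 n)
        nlinarith
    _ ≤ (1/Real.sqrt n) * 7 := by
        have : (0:ℝ) ≤ 7 := by norm_num
        nlinarith
    _ = 7 / Real.sqrt n := by ring
    _ ≤ δ := hsqrt


def sCirc : Set ℂ := {w | normSq w = w.im}

noncomputable instance : Zero sCirc := ⟨⟨0, by simp [sCirc]⟩⟩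

lemma sCirc_zero : ((0 : sCirc) : ℂ) = 0 := rfl

instance : Fact (0 ∈ sCirc) := ⟨by simp [sCirc]⟩

lemma sCirc_norm_le_one : ∀ w ∈ sCirc, ‖w‖ ≤ 1 := by
  intro w hw
  have h1 : normSq w = w.im := hw
  have h2 : ‖w‖^2 = normSq w := by
    rw [Complex.sq_norm]
  have h3 : w.im ≤ ‖w‖ := by
    exact le_trans (le_abs_self _) (Complex.abs_im_le_norm w)
  nlinarith [norm_nonneg w]

instance : CompactSpace sCirc := by
  rw [← isCompact_iff_compactSpace]
  have hclosed : IsClosed sCirc := isClosed_eq Complex.continuous_normSq Complex.continuous_im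
  have hsub : sCirc ⊆ Metric.closedBall (0:ℂ) 1 := by
    intro w hw
    rw [Metric.mem_closedBall, dist_zero_right]
    exact sCirc_norm_le_one w hw
  exact (isCompact_closedBall (0:ℂ) 1).of_isClosed_subset hclosed hsub

noncomputable def Wm (x : ℝ) : sCirc := ⟨((x:ℂ) - I)⁻¹, w_normSq_eq_im x⟩

open scoped ContinuousMapZero in
lemma pullback_mem (F : C(sCirc, ℂ)₀)
    (hF : F ∈ NonUnitalStarAlgebra.adjoin ℂ {(ContinuousMapZero.id sCirc)}) :
    (fun x : ℝ => F (Wm x)) ∈ Submodule.span ℂ S2' := by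
  induction hF using NonUnitalStarAlgebra.adjoin_induction with
  | mem f hf =>
    rw [Set.mem_singleton_iff] at hf; subst hf
    have : (fun x : ℝ => (ContinuousMapZero.id sCirc) (Wm x)) =
        fun x : ℝ => 1 / ((x:ℂ) - I) ^ 1 := by
      funext x
      simp [ContinuousMapZero.id, Wm, one_div]
      rfl
    rw [this]
    exact Submodule.subset_span ⟨1, le_refl 1, Or.inl rfl⟩
  | add f g _ _ hf hg =>
    have : (fun x : ℝ => (f + g) (Wm x)) =
        (fun x : ℝ => f (Wm x)) + (fun x : ℝ => g (Wm x)) := by funext x; simp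
    rw [this]; exact Submodule.add_mem _ hf hg
  | zero =>
    have : (fun x : ℝ => (0 : C(sCirc, ℂ)₀) (Wm x)) = (0 : ℝ → ℂ) := by funext x; simp
    rw [this]; exact Submodule.zero_mem _
  | mul f g _ _ hf hg =>
    have : (fun x : ℝ => (f * g) (Wm x)) =
        (fun x : ℝ => f (Wm x)) * (fun x : ℝ => g (Wm x)) := by funext x; simp
    rw [this]; exact mul_mem_span' hf hg
  | smul c f _ hf =>
    have : (fun x : ℝ => (c • f) (Wm x)) = c • (fun x : ℝ => f (Wm x)) := by funext x; simp
    rw [this]; exact Submodule.smul_mem _ _ hf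
  | star f _ hf =>
    have : (fun x : ℝ => (star f) (Wm x)) =
        (fun x : ℝ => starRingEnd ℂ (f (Wm x))) := by
      funext x
      simp [RCLike.star_def]
    rw [this]; exact conj_mem_span S2'_conj_closed hf

open scoped ContinuousMapZero

noncomputable def gext (g : ℝ → ℂ) : ℂ → ℂ :=
  fun w => if w = 0 then 0 else g ((w⁻¹ + I).re)

lemma sCirc_inv_im {w : ℂ} (hw : w ∈ sCirc) (hw0 : w ≠ 0) : (w⁻¹).im = -1 := by
  have h1 : normSq w = w.im := hw
  have h2 : normSq w ≠ 0 := by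
    simp only [ne_eq, Complex.normSq_eq_zero]
    exact hw0
  have h3 : w.im ≠ 0 := h1 ▸ h2
  rw [Complex.inv_im, h1, neg_div, div_self h3]

lemma sCirc_inv_add_I {w : ℂ} (hw : w ∈ sCirc) (hw0 : w ≠ 0) :
    w⁻¹ + I = (((w⁻¹ + I).re : ℝ) : ℂ) := by
  have him : (w⁻¹ + I).im = 0 := by
    rw [Complex.add_im, sCirc_inv_im hw hw0]
    simp
  apply Complex.ext
  · simp
  · rw [Complex.ofReal_im, him]

lemma gext_continuousOn (g : ℝ → ℂ) (hgc : Continuous g)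
    (hg0 : Tendsto g (cocompact ℝ) (nhds 0)) :
    Continuous (fun q : sCirc => gext g (q : ℂ)) := by
  rw [continuous_iff_continuousAt]
  intro p
  by_cases hp : (p : ℂ) = 0
  · -- continuity at 0
    rw [ContinuousAt]
    have hval : gext g (p : ℂ) = 0 := by rw [hp]; simp [gext]
    rw [hval]
    intro U hU
    have h1 : {x : ℝ | g x ∈ U} ∈ cocompact ℝ := hg0 hU
    obtain ⟨K, hK, hKsub⟩ := mem_cocompact.mp h1
    obtain ⟨R, hR⟩ := hK.isBounded.subset_closedBall 0
    set R' : ℝ := max R 0 with hR'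
    have hr : (0:ℝ) < (R' + 2)⁻¹ := by positivity
    have key : ∀ q : sCirc, ‖(q : ℂ)‖ < (R' + 2)⁻¹ → gext g (q : ℂ) ∈ U := by
      intro q hq
      by_cases hq0 : (q : ℂ) = 0
      · rw [hq0]; simpa [gext] using mem_of_mem_nhds hU
      · rw [gext, if_neg hq0]
        apply hKsub
        intro hxK
        have hxR : |((q:ℂ)⁻¹ + I).re| ≤ R := by
          have := hR hxK
          rw [Metric.mem_closedBall, Real.dist_eq, sub_zero] at this
          exact this
        have hnorm : ‖(q:ℂ)⁻¹ + I‖ ≥ ‖(q:ℂ)⁻¹‖ - 1 := by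
          have h := norm_sub_le ((q:ℂ)⁻¹ + I) I
          simp only [add_sub_cancel_right] at h
          have hI : ‖(I:ℂ)‖ = 1 := by simp
          rw [hI] at h
          linarith
        have heq : ‖(q:ℂ)⁻¹ + I‖ = |((q:ℂ)⁻¹ + I).re| := by
          rw [sCirc_inv_add_I q.2 hq0]
          rw [Complex.norm_real, Real.norm_eq_abs, Complex.ofReal_re]
        have hqpos : 0 < ‖(q:ℂ)‖ := norm_pos_iff.mpr hq0
        have hinv : ‖(q:ℂ)⁻¹‖ = ‖(q:ℂ)‖⁻¹ := norm_inv _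
        have hbig : ‖(q:ℂ)‖⁻¹ > R' + 2 := by
          rw [gt_iff_lt, ← inv_inv (R' + 2)]
          exact inv_strictAnti₀ hqpos hq
        have : |((q:ℂ)⁻¹ + I).re| > R' + 1 := by
          rw [← heq]
          calc R' + 1 < ‖(q:ℂ)‖⁻¹ - 1 := by linarith
            _ = ‖(q:ℂ)⁻¹‖ - 1 := by rw [hinv]
            _ ≤ ‖(q:ℂ)⁻¹ + I‖ := hnorm
        have hRR' : R ≤ R' := le_max_left R 0
        linarith
    have hV : {q : sCirc | ‖(q : ℂ)‖ < (R' + 2)⁻¹} ∈ nhds p := by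
      have hcont : Continuous (fun q : sCirc => ‖(q : ℂ)‖) := continuous_subtype_val.norm
      have : ‖(p : ℂ)‖ < (R' + 2)⁻¹ := by rw [hp]; simpa using hr
      exact (hcont.continuousAt).preimage_mem_nhds (Iio_mem_nhds this)
    rw [Filter.mem_map]
    filter_upwards [hV] with q hq using key q hq
  · -- continuity at p ≠ 0
    have hcont : ContinuousAt (fun w : ℂ => g ((w⁻¹ + I).re)) (p : ℂ) := by
      apply hgc.continuousAt.comp
      apply ContinuousAt.comp
      · exact Complex.continuous_re.continuousAt
      · exact ContinuousAt.add (continuousAt_inv₀ hp) continuousAt_const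
    have hcomp : ContinuousAt (fun q : sCirc => g (((q:ℂ)⁻¹ + I).re)) p :=
      hcont.comp continuousAt_subtype_val
    apply hcomp.congr
    have hne : {q : sCirc | (q : ℂ) ≠ 0} ∈ nhds p := by
      have : IsOpen {q : sCirc | (q : ℂ) ≠ 0} :=
        (isOpen_compl_singleton).preimage continuous_subtype_val
      exact this.mem_nhds hp
    filter_upwards [hne] with q hq
    rw [gext, if_neg hq]

noncomputable def Gmap (g : ℝ → ℂ) (hgc : Continuous g)
    (hg0 : Tendsto g (cocompact ℝ) (nhds 0)) : C(sCirc, ℂ)₀ :=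
  ⟨⟨fun q => gext g (q : ℂ), gext_continuousOn g hgc hg0⟩, by simp [sCirc_zero, gext]⟩

lemma Gmap_Wm (g : ℝ → ℂ) (hgc : Continuous g)
    (hg0 : Tendsto g (cocompact ℝ) (nhds 0)) (x : ℝ) :
    Gmap g hgc hg0 (Wm x) = g x := by
  have h1 : ((Wm x : sCirc) : ℂ) = ((x:ℂ) - I)⁻¹ := rfl
  have h2 : ((x:ℂ) - I)⁻¹ ≠ 0 := inv_ne_zero (sub_I_ne x)
  show gext g (((x:ℂ) - I)⁻¹) = g x
  rw [gext, if_neg h2, inv_inv]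
  congr 1
  simp

lemma approx_all {f : ℝ → ℂ} (hf : f ∈ Submodule.span ℂ S2') :
    ∀ δ : ℝ, 0 < δ → ∃ h ∈ Submodule.span ℂ S2, ∀ x : ℝ, ‖f x - h x‖ ≤ δ := by
  induction hf using Submodule.span_induction with
  | mem f hfm =>
    intro δ hδ
    obtain ⟨k, hk, rfl | rfl⟩ := hfm
    · obtain ⟨h, hh, hb⟩ := gen_approx k hk δ hδ
      refine ⟨h, hh, fun x => ?_⟩
      show ‖1 / ((x:ℂ) - I) ^ k - h x‖ ≤ δ
      rw [one_div, ← inv_pow]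
      exact hb x
    · obtain ⟨h, hh, hb⟩ := gen_approx k hk δ hδ
      refine ⟨fun x => starRingEnd ℂ (h x), conj_mem_span S2_conj_closed hh, fun x => ?_⟩
      have h1 : (1:ℂ) / ((x:ℂ) + I) ^ k = starRingEnd ℂ (1 / ((x:ℂ) - I) ^ k) :=
        (congrFun (conj_gen_sub k) x).symm
      show ‖1 / ((x:ℂ) + I) ^ k - starRingEnd ℂ (h x)‖ ≤ δ
      rw [h1, ← map_sub, RCLike.norm_conj, one_div, ← inv_pow]
      exact hb x
  | zero =>
    intro δ hδ
    exact ⟨0, Submodule.zero_mem _, fun x => by simpa using le_of_lt hδ⟩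
  | add f₁ f₂ _ _ h1 h2 =>
    intro δ hδ
    obtain ⟨g₁, hg₁, hb₁⟩ := h1 (δ/2) (by positivity)
    obtain ⟨g₂, hg₂, hb₂⟩ := h2 (δ/2) (by positivity)
    refine ⟨g₁ + g₂, Submodule.add_mem _ hg₁ hg₂, fun x => ?_⟩
    have : (f₁ + f₂) x - (g₁ + g₂) x = (f₁ x - g₁ x) + (f₂ x - g₂ x) := by
      simp; ring
    rw [this]
    calc ‖(f₁ x - g₁ x) + (f₂ x - g₂ x)‖ ≤ ‖f₁ x - g₁ x‖ + ‖f₂ x - g₂ x‖ := norm_add_le _ _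
      _ ≤ δ/2 + δ/2 := add_le_add (hb₁ x) (hb₂ x)
      _ = δ := by ring
  | smul c f₁ _ h1 =>
    intro δ hδ
    rcases eq_or_ne c 0 with rfl | hc
    · refine ⟨0, Submodule.zero_mem _, fun x => ?_⟩
      simpa using le_of_lt hδ
    · have hcn : (0:ℝ) < ‖c‖ := norm_pos_iff.mpr hc
      obtain ⟨g₁, hg₁, hb₁⟩ := h1 (δ/‖c‖) (div_pos hδ hcn)
      refine ⟨c • g₁, Submodule.smul_mem _ _ hg₁, fun x => ?_⟩
      have : (c • f₁) x - (c • g₁) x = c * (f₁ x - g₁ x) := by simp; ring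
      rw [this, norm_mul]
      calc ‖c‖ * ‖f₁ x - g₁ x‖ ≤ ‖c‖ * (δ/‖c‖) :=
          mul_le_mul_of_nonneg_left (hb₁ x) (norm_nonneg c)
        _ = δ := by
          rw [mul_div_cancel₀ _ (ne_of_gt hcn)]

lemma density_part (g : ℝ → ℂ) (hgc : Continuous g)
    (hg0 : Tendsto g (cocompact ℝ) (nhds 0)) (ε : ℝ) (hε : 0 < ε) :
    ∃ h ∈ Submodule.span ℂ S2, ∀ x : ℝ, ‖g x - h x‖ < ε := by
  set G : C(sCirc, ℂ)₀ := Gmap g hgc hg0 with hGdef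
  have hdense := ContinuousMapZero.adjoin_id_dense (𝕜 := ℂ) sCirc
  have hGmem : G ∈ closure
      ((NonUnitalStarAlgebra.adjoin ℂ {(ContinuousMapZero.id sCirc)} :
        NonUnitalStarSubalgebra ℂ C(sCirc, ℂ)₀) : Set C(sCirc, ℂ)₀) := hdense G
  have hind := (ContinuousMapZero.isEmbedding_toContinuousMap (X := sCirc) (R := ℂ)).isInducing
  rw [hind.closure_eq_preimage_closure_image] at hGmem
  obtain ⟨F', hF'mem, hdist⟩ := Metric.mem_closure_iff.mp hGmem (ε/3) (by positivity)
  obtain ⟨F, hF, rfl⟩ := hF'mem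
  have hspan' := pullback_mem F hF
  obtain ⟨h, hh, hhb⟩ := approx_all hspan' (ε/3) (by positivity)
  refine ⟨h, hh, fun x => ?_⟩
  have hpt : dist (G (Wm x)) (F (Wm x)) ≤ dist (G : C(sCirc, ℂ)) (F : C(sCirc, ℂ)) :=
    ContinuousMap.dist_apply_le_dist (Wm x)
  have h1 : ‖g x - F (Wm x)‖ < ε/3 := by
    have : g x = G (Wm x) := (Gmap_Wm g hgc hg0 x).symm
    rw [this, ← dist_eq_norm]
    exact lt_of_le_of_lt hpt hdist
  have h2 : ‖F (Wm x) - h x‖ ≤ ε/3 := hhb x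
  calc ‖g x - h x‖ = ‖(g x - F (Wm x)) + (F (Wm x) - h x)‖ := by ring_nf
    _ ≤ ‖g x - F (Wm x)‖ + ‖F (Wm x) - h x‖ := norm_add_le _ _
    _ < ε/3 + ε/3 := by linarith
    _ ≤ ε := by linarith

/-- The span of `{f_m'', conj(f_m)'' : m ≥ 1}` (with `f_m(x) = (x-i)^{-m}`)
equals the span of `{(x-i)^{-k}, (x+i)^{-k} : k ≥ 3}`, and this span is
uniformly dense in `C₀(ℝ)`. -/
theorem span_secondDerivatives_dense :
    Submodule.span ℂ S1 = Submodule.span ℂ S2 ∧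
    ∀ g : ℝ → ℂ, Continuous g → Tendsto g (cocompact ℝ) (nhds 0) →
      ∀ ε : ℝ, 0 < ε →
        ∃ h ∈ Submodule.span ℂ S1, ∀ x : ℝ, ‖g x - h x‖ < ε := by
  refine ⟨spans_eq, ?_⟩
  intro g hgc hg0 ε hε
  obtain ⟨h, hh, hb⟩ := density_part g hgc hg0 ε hε
  rw [spans_eq]
  exact ⟨h, hh, hb⟩
end
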